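/- arXiv:1610.06770 — 11 statements merged into one kernel-verified Lean document; each statement's English description precedes it below -/
import Mathlib

section
/- Let K be an algebraically closed field and let x1, x2 be coprime squarefree monomials in a polynomial ring over K with deg(x1) + deg(x2) ≥ d + 2, where d > 0. Suppose f1, f2 are homogeneous forms with deg(fi) = d - deg(xi), and f1·x1 + f2·x2 is a product of d linear forms. Then f1 = 0 or f2 = 0. -/
open MvPolynomial

/-- `p` is a product of `d` linear forms (each possibly zero). -/
def ProdLinear {K σ : Type*} [CommRing K] (d : ℕ) (p : MvPolynomial σ K) : Prop :=
  ∃ l : Fin d → MvPolynomial σ K, (∀ j, (l j).IsHomogeneous 1) ∧ p = ∏ j, l j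

section Aux

variable {K σ : Type*} [CommRing K]

lemma degree_one_single {m : σ →₀ ℕ} (h : Finsupp.degree m = 1) :
    ∃ z, m = Finsupp.single z 1 := by
  classical
  have hne : m.support.Nonempty := by
    rcases Finset.eq_empty_or_nonempty m.support with he | hne
    · exfalso
      rw [Finsupp.degree_apply, he, Finset.sum_empty] at h
      exact one_ne_zero h.symm
    · exact hne
  obtain ⟨z, hz⟩ := hne
  refine ⟨z, ?_⟩
  have hzpos : 1 ≤ m z := Nat.one_le_iff_ne_zero.mpr (Finsupp.mem_support_iff.mp hz)
  have hsub : m.support ⊆ {z} := by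
    intro w hw
    by_contra hwz
    have hwne : w ≠ z := by simpa using hwz
    have hwpos : 1 ≤ m w := Nat.one_le_iff_ne_zero.mpr (Finsupp.mem_support_iff.mp hw)
    have : 2 ≤ Finsupp.degree m := by
      have h2 : ({w, z} : Finset σ) ⊆ m.support := by
        intro u hu
        rcases Finset.mem_insert.mp hu with rfl | hu
        · exact hw
        · rw [Finset.mem_singleton.mp hu]; exact hz
      calc 2 = ∑ u ∈ ({w, z} : Finset σ), 1 := by
              rw [Finset.sum_const, smul_eq_mul, mul_one,
                Finset.card_insert_of_notMem (by simpa using hwne), Finset.card_singleton]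
        _ ≤ ∑ u ∈ ({w, z} : Finset σ), m u := by
              refine Finset.sum_le_sum ?_
              intro u hu
              rcases Finset.mem_insert.mp hu with rfl | hu
              · exact hwpos
              · rw [Finset.mem_singleton.mp hu]; exact hzpos
        _ ≤ ∑ u ∈ m.support, m u := by
              refine Finset.sum_le_sum_of_subset_of_nonneg h2 ?_
              intros; exact Nat.zero_le _
        _ = Finsupp.degree m := rfl
    omega
  have := Finsupp.support_subset_singleton.mp hsub
  have hmz : m z = 1 := by
    have : Finsupp.degree m = m z := by
      rw [Finsupp.degree_apply]
      rw [Finset.sum_subset hsub]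
      · simp
      · intro u _ hu
        exact Finsupp.notMem_support_iff.mp hu
    omega
  rw [hmz] at this
  exact this

lemma hom1_support {l : MvPolynomial σ K} (hl : l.IsHomogeneous 1) {m : σ →₀ ℕ}
    (hm : m ∈ l.support) : ∃ z, m = Finsupp.single z 1 := by
  apply degree_one_single
  have := hl (MvPolynomial.mem_support_iff.mp hm)
  rw [Finsupp.degree_eq_weight_one]
  exact this

lemma vars_single_X_dvd {l : MvPolynomial σ K} (hl : l.IsHomogeneous 1) {x : σ}
    (hv : l.vars ⊆ {x}) : X x ∣ l := by
  classical
  have hsupp : l.support ⊆ {Finsupp.single x 1} := by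
    intro m hm
    obtain ⟨z, rfl⟩ := hom1_support hl hm
    have hz : z ∈ l.vars := by
      rw [mem_vars]
      exact ⟨Finsupp.single z 1, hm, by simp [Finsupp.support_single_ne_zero]⟩
    have : z = x := Finset.mem_singleton.mp (hv hz)
    simp [this]
  have hle : l = monomial (Finsupp.single x 1) (coeff (Finsupp.single x 1) l) := by
    ext m
    rw [coeff_monomial]
    split_ifs with h
    · rw [h]
    · rw [← MvPolynomial.notMem_support_iff]
      intro hm
      exact h (Finset.mem_singleton.mp (hsupp hm)).symm
  refine ⟨C (coeff (Finsupp.single x 1) l), ?_⟩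
  conv_lhs => rw [hle]
  rw [X, C_apply, monomial_mul]
  simp

lemma aeval_kill_vars {l : MvPolynomial σ K} (hl : l.IsHomogeneous 1) (x y : σ)
    [DecidableEq σ]
    (h0 : aeval (fun z : σ => if z = x ∨ z = y then (0 : MvPolynomial σ K) else X z) l = 0) :
    l.vars ⊆ {x, y} := by
  classical
  intro z0 hz0
  by_contra hz0m
  have hz0x : z0 ≠ x := fun h => hz0m (by simp [h])
  have hz0y : z0 ≠ y := fun h => hz0m (by simp [h])
  set g : σ → MvPolynomial σ K := fun z => if z = x ∨ z = y then 0 else X z with hg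
  -- the coefficient of `X z0` in `aeval g l` equals the one in `l`
  have hcoeffne : coeff (Finsupp.single z0 1) l ≠ 0 := by
    rw [mem_vars] at hz0
    obtain ⟨m, hm, hz0m'⟩ := hz0
    obtain ⟨z, rfl⟩ := hom1_support hl hm
    have : z0 = z := by
      have := hz0m'
      rw [Finsupp.support_single_ne_zero _ one_ne_zero] at this
      exact Finset.mem_singleton.mp this
    rw [this]
    exact MvPolynomial.mem_support_iff.mp hm
  have hkey : coeff (Finsupp.single z0 1) (aeval g l) = coeff (Finsupp.single z0 1) l := by
    conv_lhs => rw [← support_sum_monomial_coeff l]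
    rw [map_sum, coeff_sum]
    rw [Finset.sum_eq_single_of_mem (Finsupp.single z0 1)]
    · rw [aeval_monomial]
      rw [Finsupp.prod_single_index (by simp)]
      have : g z0 = X z0 := by
        rw [hg]; simp [hz0x, hz0y]
      rw [this, pow_one]
      rw [algebraMap_eq, coeff_C_mul, coeff_X, if_pos rfl, mul_one]
    · rw [mem_support_iff]
      exact hcoeffne
    · intro m hm hmne
      obtain ⟨z, rfl⟩ := hom1_support hl hm
      have hzne : z ≠ z0 := by
        intro h; exact hmne (by rw [h])
      rw [aeval_monomial, Finsupp.prod_single_index (by simp), pow_one]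
      by_cases hzc : z = x ∨ z = y
      · have : g z = 0 := by rw [hg]; simp [hzc]
        rw [this, mul_zero, coeff_zero]
      · have : g z = X z := by rw [hg]; simp [hzc]
        rw [this, algebraMap_eq, coeff_C_mul, coeff_X', if_neg (fun h =>
          hzne (Finsupp.single_left_injective one_ne_zero h))]
        ring
  rw [h0, coeff_zero] at hkey
  exact hcoeffne hkey.symm

lemma comb_lemma {σ : Type*} [DecidableEq σ] (d : ℕ) (S1 S2 : Finset σ) (hdisj : Disjoint S1 S2)
    (hcard : d + 2 ≤ S1.card + S2.card)
    (V : Fin d → Finset σ) (hne : ∀ j, (V j).Nonempty)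
    (hpair : ∀ x ∈ S1, ∀ y ∈ S2, ∃ j, V j ⊆ {x, y}) :
    (∀ x ∈ S1, ∃ j, V j ⊆ {x}) ∨ (∀ y ∈ S2, ∃ j, V j ⊆ {y}) := by
  classical
  by_contra hcon
  push_neg at hcon
  obtain ⟨⟨x0, hx0S, hx0⟩, ⟨y0, hy0S, hy0⟩⟩ := hcon
  -- the selected pairs
  set T : Finset (σ × σ) := (S1 ×ˢ S2).filter (fun p => p.1 = x0 ∨ p.2 = y0) with hT
  have hchoice : ∀ p ∈ T, ∃ j, V j ⊆ {p.1, p.2} := by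
    intro p hp
    rw [hT, Finset.mem_filter, Finset.mem_product] at hp
    exact hpair p.1 hp.1.1 p.2 hp.1.2
  choose jfun hjfun using hchoice
  -- jfun is injective on T
  have hinj : ∀ p, ∀ hp : p ∈ T, ∀ q, ∀ hq : q ∈ T, jfun p hp = jfun q hq → p = q := by
    intro p hp q hq hpq
    have hpm := Finset.mem_filter.mp hp
    have hqm := Finset.mem_filter.mp hq
    have hp1 : p.1 ∈ S1 := (Finset.mem_product.mp hpm.1).1
    have hp2 : p.2 ∈ S2 := (Finset.mem_product.mp hpm.1).2
    have hq1 : q.1 ∈ S1 := (Finset.mem_product.mp hqm.1).1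
    have hq2 : q.2 ∈ S2 := (Finset.mem_product.mp hqm.1).2
    have hVp := hjfun p hp
    have hVq := hpq ▸ hjfun q hq
    -- key sub-claim: if p.1 = q.1 then p.2 = q.2
    have claim1 : p.1 = q.1 → p.2 = q.2 := by
      intro h11
      by_contra h22
      have hsub : V (jfun p hp) ⊆ {p.1} := by
        intro v hv
        have hv1 := hVp hv
        have hv2 := hVq hv
        rcases Finset.mem_insert.mp hv1 with rfl | hv1
        · exact Finset.mem_singleton.mpr rfl
        · rw [Finset.mem_singleton] at hv1
          subst hv1
          exfalso
          rcases Finset.mem_insert.mp hv2 with h | h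
          · have : p.2 ∈ S1 := by rw [h]; exact hq1
            exact (Finset.disjoint_left.mp hdisj this) hp2
          · exact h22 (Finset.mem_singleton.mp h)
      have hne1 : p.1 ≠ x0 := by
        intro h
        exact hx0 (jfun p hp) (h ▸ hsub)
      have hpy : p.2 = y0 := (hpm.2).resolve_left hne1
      have hqy : q.2 = y0 := (hqm.2).resolve_left (h11 ▸ hne1)
      exact h22 (hpy.trans hqy.symm)
    have claim2 : p.2 = q.2 → p.1 = q.1 := by
      intro h22
      by_contra h11
      have hsub : V (jfun p hp) ⊆ {p.2} := by
        intro v hv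
        have hv1 := hVp hv
        have hv2 := hVq hv
        rcases Finset.mem_insert.mp hv1 with rfl | hv1
        · exfalso
          rcases Finset.mem_insert.mp hv2 with h | h
          · exact h11 h
          · rw [Finset.mem_singleton] at h
            have : p.1 ∈ S2 := by rw [h]; exact hq2
            exact (Finset.disjoint_left.mp hdisj hp1) this
        · exact hv1
      have hne2 : p.2 ≠ y0 := by
        intro h
        exact hy0 (jfun p hp) (h ▸ hsub)
      have hpx : p.1 = x0 := (hpm.2).resolve_right hne2
      have hqx : q.1 = x0 := (hqm.2).resolve_right (h22 ▸ hne2)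
      exact h11 (hpx.trans hqx.symm)
    obtain ⟨v, hv⟩ := hne (jfun p hp)
    have hv1 := hVp hv
    have hv2 := hVq hv
    rcases Finset.mem_insert.mp hv1 with rfl | hv1
    · -- v = p.1
      have h11 : p.1 = q.1 := by
        rcases Finset.mem_insert.mp hv2 with h | h
        · exact h
        · rw [Finset.mem_singleton] at h
          have : p.1 ∈ S2 := by rw [h]; exact hq2
          exact absurd this (Finset.disjoint_left.mp hdisj hp1)
      exact Prod.ext h11 (claim1 h11)
    · rw [Finset.mem_singleton] at hv1
      subst hv1
      have h22 : p.2 = q.2 := by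
        rcases Finset.mem_insert.mp hv2 with h | h
        · have : p.2 ∈ S1 := by rw [h]; exact hq1
          exact absurd hp2 (Finset.disjoint_left.mp hdisj this)
        · exact Finset.mem_singleton.mp h
      exact Prod.ext (claim2 h22) h22
  -- cardinality of T
  have hTcard : T.card = S1.card + S2.card - 1 := by
    have hTeq : T = ({x0} ×ˢ S2) ∪ (S1 ×ˢ {y0}) := by
      ext p
      rw [hT]
      simp only [Finset.mem_filter, Finset.mem_product, Finset.mem_union, Finset.mem_singleton]
      constructor
      · rintro ⟨⟨h1, h2⟩, h3 | h3⟩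
        · exact Or.inl ⟨h3, h2⟩
        · exact Or.inr ⟨h1, h3⟩
      · rintro (⟨h1, h2⟩ | ⟨h1, h2⟩)
        · exact ⟨⟨h1 ▸ hx0S, h2⟩, Or.inl h1⟩
        · exact ⟨⟨h1, h2 ▸ hy0S⟩, Or.inr h2⟩
    have hint : (({x0} ×ˢ S2) ∩ (S1 ×ˢ {y0})) = {(x0, y0)} := by
      ext p
      simp only [Finset.mem_inter, Finset.mem_product, Finset.mem_singleton]
      constructor
      · rintro ⟨⟨h1, h2⟩, h3, h4⟩
        exact Prod.ext h1 h4
      · rintro rfl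
        exact ⟨⟨rfl, hy0S⟩, hx0S, rfl⟩
    rw [hTeq]
    rw [Finset.card_union, hint]
    simp [Finset.card_product]
    omega
  have hTne : (x0, y0) ∈ T := by
    rw [hT, Finset.mem_filter, Finset.mem_product]
    exact ⟨⟨hx0S, hy0S⟩, Or.inl rfl⟩
  haveI : Nonempty (Fin d) := ⟨jfun (x0, y0) hTne⟩
  have hle : T.card ≤ d := by
    calc T.card ≤ (Finset.univ : Finset (Fin d)).card := by
          apply Finset.card_le_card_of_injOn (fun p => if h : p ∈ T then jfun p h else Classical.arbitrary _)
          · intros; simp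
          · intro p hp q hq h
            simp only [Finset.mem_coe] at hp hq
            dsimp only at h
            rw [dif_pos hp, dif_pos hq] at h
            exact hinj p hp q hq h
      _ = d := by simp
  omega

lemma vanish_lemma {S1 S2 : Finset σ} (hdisj : Disjoint S1 S2) {d : ℕ}
    (hcard : d + 2 ≤ S1.card + S2.card) {G : MvPolynomial σ K} (hG : G.IsHomogeneous d)
    (h1 : ∀ x ∈ S1, X x ∣ G) (h2 : ∀ y ∈ S2, X y ∣ G) : G = 0 := by
  classical
  by_contra hG0
  obtain ⟨m, hm⟩ := MvPolynomial.support_nonempty.mpr hG0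
  have hmem : ∀ z ∈ S1 ∪ S2, z ∈ m.support := by
    intro z hz
    have hdvd : X z ∣ G := by
      rcases Finset.mem_union.mp hz with h | h
      · exact h1 z h
      · exact h2 z h
    obtain ⟨q, hq⟩ := hdvd
    by_contra hzm
    have : coeff m G = 0 := by
      rw [hq, mul_comm, coeff_mul_X', if_neg hzm]
    exact MvPolynomial.mem_support_iff.mp hm this
  have hdeg : Finsupp.degree m = d := by
    rw [Finsupp.degree_eq_weight_one]
    exact hG (MvPolynomial.mem_support_iff.mp hm)
  have : S1.card + S2.card ≤ d := by
    calc S1.card + S2.card = (S1 ∪ S2).card := (Finset.card_union_of_disjoint hdisj).symm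
      _ ≤ m.support.card := Finset.card_le_card hmem
      _ = ∑ z ∈ m.support, 1 := by simp
      _ ≤ ∑ z ∈ m.support, m z := by
          refine Finset.sum_le_sum ?_
          intro z hz
          exact Nat.one_le_iff_ne_zero.mpr (Finsupp.mem_support_iff.mp hz)
      _ = Finsupp.degree m := rfl
      _ = d := hdeg
  omega

end Aux

theorem stmt_0 {K σ : Type*} [Field K] [IsAlgClosed K] (d : ℕ) (hd : 0 < d)
    (S1 S2 : Finset σ) (hdisj : Disjoint S1 S2)
    (h1 : S1.card ≤ d) (h2 : S2.card ≤ d)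
    (hdeg : d + 2 ≤ S1.card + S2.card)
    (f1 f2 : MvPolynomial σ K)
    (hf1 : f1.IsHomogeneous (d - S1.card)) (hf2 : f2.IsHomogeneous (d - S2.card))
    (hprod : ProdLinear d (f1 * ∏ x ∈ S1, X x + f2 * ∏ x ∈ S2, X x)) :
    f1 = 0 ∨ f2 = 0 := by
  classical
  obtain ⟨l, hlhom, hP⟩ := hprod
  set m1 : MvPolynomial σ K := ∏ x ∈ S1, X x with hm1def
  set m2 : MvPolynomial σ K := ∏ x ∈ S2, X x with hm2def
  set P : MvPolynomial σ K := f1 * m1 + f2 * m2 with hPdef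
  have hm1hom : m1.IsHomogeneous S1.card := by
    have := MvPolynomial.IsHomogeneous.prod S1 (fun x => (X x : MvPolynomial σ K)) (fun _ => 1)
      (fun i _ => isHomogeneous_X K i)
    simpa using this
  have hm2hom : m2.IsHomogeneous S2.card := by
    have := MvPolynomial.IsHomogeneous.prod S2 (fun x => (X x : MvPolynomial σ K)) (fun _ => 1)
      (fun i _ => isHomogeneous_X K i)
    simpa using this
  have hm1ne : m1 ≠ 0 := by
    rw [hm1def]
    rw [Finset.prod_ne_zero_iff]
    intro x _
    exact X_ne_zero x
  have hm2ne : m2 ≠ 0 := by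
    rw [hm2def]
    rw [Finset.prod_ne_zero_iff]
    intro x _
    exact X_ne_zero x
  have hG1hom : (f1 * m1).IsHomogeneous d := by
    have := hf1.mul hm1hom
    rwa [Nat.sub_add_cancel h1] at this
  have hG2hom : (f2 * m2).IsHomogeneous d := by
    have := hf2.mul hm2hom
    rwa [Nat.sub_add_cancel h2] at this
  by_cases hP0 : P = 0
  · -- then f1 * m1 = -(f2 * m2) is divisible by all the variables
    left
    have hGeq : f1 * m1 = -(f2 * m2) := by
      rw [hPdef] at hP0
      linear_combination hP0
    have hvan : f1 * m1 = 0 := by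
      apply vanish_lemma hdisj hdeg hG1hom
      · intro x hx
        exact Dvd.dvd.mul_left (Finset.dvd_prod_of_mem _ hx) f1
      · intro y hy
        rw [hGeq]
        exact Dvd.dvd.neg_right (Dvd.dvd.mul_left (Finset.dvd_prod_of_mem _ hy) f2)
    rcases mul_eq_zero.mp hvan with h | h
    · exact h
    · exact absurd h hm1ne
  · have hlne : ∀ j, l j ≠ 0 := by
      intro j hj
      apply hP0
      rw [hP]
      exact Finset.prod_eq_zero (Finset.mem_univ j) hj
    have hpair : ∀ x ∈ S1, ∀ y ∈ S2, ∃ j, (l j).vars ⊆ {x, y} := by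
      intro x hx y hy
      set g : σ → MvPolynomial σ K := fun z => if z = x ∨ z = y then 0 else X z with hg
      have hgP : aeval g P = 0 := by
        rw [hPdef, map_add, map_mul, map_mul, hm1def, hm2def, map_prod, map_prod]
        have hz1 : (∏ x' ∈ S1, aeval g (X x' : MvPolynomial σ K)) = 0 := by
          apply Finset.prod_eq_zero hx
          rw [aeval_X, hg]
          simp
        have hz2 : (∏ y' ∈ S2, aeval g (X y' : MvPolynomial σ K)) = 0 := by
          apply Finset.prod_eq_zero hy
          rw [aeval_X, hg]
          simp
        rw [hz1, hz2, mul_zero, mul_zero, add_zero]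
      have hgP' : (∏ j, aeval g (l j)) = 0 := by
        rw [← map_prod, ← hP]
        exact hgP
      obtain ⟨j, _, hj⟩ := Finset.prod_eq_zero_iff.mp hgP'
      exact ⟨j, aeval_kill_vars (hlhom j) x y hj⟩
    have hvarsne : ∀ j, (l j).vars.Nonempty := by
      intro j
      obtain ⟨m, hm⟩ := MvPolynomial.support_nonempty.mpr (hlne j)
      obtain ⟨z, rfl⟩ := hom1_support (hlhom j) hm
      exact ⟨z, (mem_vars z).mpr ⟨Finsupp.single z 1, hm, by
        rw [Finsupp.support_single_ne_zero _ one_ne_zero]; exact Finset.mem_singleton_self z⟩⟩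
    rcases comb_lemma d S1 S2 hdisj hdeg (fun j => (l j).vars) hvarsne hpair with hc | hc
    · -- every X x for x ∈ S1 divides P, hence divides f2 * m2
      right
      have hvan : f2 * m2 = 0 := by
        apply vanish_lemma hdisj hdeg hG2hom
        · intro x hx
          obtain ⟨j, hj⟩ := hc x hx
          have hdvdP : X x ∣ P := by
            rw [hP]
            exact (vars_single_X_dvd (hlhom j) hj).trans
              (Finset.dvd_prod_of_mem _ (Finset.mem_univ j))
          have hdvd1 : X x ∣ f1 * m1 :=
            Dvd.dvd.mul_left (Finset.dvd_prod_of_mem _ hx) f1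
          have : f2 * m2 = P - f1 * m1 := by rw [hPdef]; ring
          rw [this]
          exact dvd_sub hdvdP hdvd1
        · intro y hy
          exact Dvd.dvd.mul_left (Finset.dvd_prod_of_mem _ hy) f2
      rcases mul_eq_zero.mp hvan with h | h
      · exact h
      · exact absurd h hm2ne
    · left
      have hvan : f1 * m1 = 0 := by
        apply vanish_lemma hdisj hdeg hG1hom
        · intro x hx
          exact Dvd.dvd.mul_left (Finset.dvd_prod_of_mem _ hx) f1
        · intro y hy
          obtain ⟨j, hj⟩ := hc y hy
          have hdvdP : X y ∣ P := by
            rw [hP]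
            exact (vars_single_X_dvd (hlhom j) hj).trans
              (Finset.dvd_prod_of_mem _ (Finset.mem_univ j))
          have hdvd2 : X y ∣ f2 * m2 :=
            Dvd.dvd.mul_left (Finset.dvd_prod_of_mem _ hy) f2
          have : f1 * m1 = P - f2 * m2 := by rw [hPdef]; ring
          rw [this]
          exact dvd_sub hdvdP hdvd2
      rcases mul_eq_zero.mp hvan with h | h
      · exact h
      · exact absurd h hm1ne
end

section
/- Let K be an algebraically closed field and let l be a linear form dividing a sum Σ_i f_i·x_i, where the x_i are pairwise coprime squarefree monomials, the f_i are homogeneous forms of degree d - deg(x_i), and the two smallest degrees among the x_i satisfy deg(x_1) + deg(x_2) ≥ d + 2. Then for each index i, l divides x_i or l divides f_i. -/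
open MvPolynomial

section Aux

variable {K σ : Type*} [Field K]

/-- A finsupp of degree one is a single. -/
lemma aux_degree_one {μ : σ →₀ ℕ} (h : μ.degree = 1) : ∃ y, μ = Finsupp.single y 1 := by
  classical
  have hne : μ.support.Nonempty := by
    by_contra hc
    rw [Finset.not_nonempty_iff_eq_empty] at hc
    have : μ.degree = 0 := by simp [Finsupp.support_eq_empty.mp hc]
    omega
  obtain ⟨y, hy⟩ := hne
  refine ⟨y, ?_⟩
  have hy1 : 1 ≤ μ y := Nat.one_le_iff_ne_zero.mpr (Finsupp.mem_support_iff.mp hy)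
  have hyle : μ y ≤ 1 := h ▸ Finsupp.le_degree y μ
  rw [Finsupp.eq_single_iff]
  constructor
  · intro z hz
    simp only [Finset.mem_singleton]
    by_contra hzy
    have hz1 : 1 ≤ μ z := Nat.one_le_iff_ne_zero.mpr (Finsupp.mem_support_iff.mp hz)
    have hsub : ({y, z} : Finset σ) ⊆ μ.support := by
      intro a ha
      simp only [Finset.mem_insert, Finset.mem_singleton] at ha
      rcases ha with rfl | rfl <;> assumption
    have hpair := Finset.sum_le_sum_of_subset (f := fun i => μ i) hsub
    rw [Finset.sum_pair (Ne.symm hzy)] at hpair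
    have hpair' : μ y + μ z ≤ ∑ i ∈ μ.support, μ i := hpair
    have hdeg : ∑ i ∈ μ.support, μ i = 1 := h
    omega
  · omega

lemma aux_prod_X_eq_monomial (T : Finset σ) :
    (∏ x ∈ T, X x : MvPolynomial σ K) = monomial (∑ x ∈ T, Finsupp.single x 1) 1 := by
  classical
  induction T using Finset.induction_on with
  | empty => simp
  | insert a s h ih =>
    rw [Finset.prod_insert h, Finset.sum_insert h, ih, X, monomial_mul, one_mul]

lemma aux_support_mul_prod_X {T : Finset σ} {q : MvPolynomial σ K} {μ : σ →₀ ℕ}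
    (h : μ ∈ (q * ∏ x ∈ T, X x).support) : ∀ x ∈ T, 1 ≤ μ x := by
  classical
  intro x hx
  rw [MvPolynomial.mem_support_iff, aux_prod_X_eq_monomial, coeff_mul_monomial'] at h
  split at h
  · rename_i hle
    have := hle x
    have hval : (∑ x' ∈ T, Finsupp.single x' (1 : ℕ)) x = 1 := by
      rw [Finsupp.finset_sum_apply]
      simp only [Finsupp.single_apply]
      rw [Finset.sum_ite_eq' T x (fun _ => 1), if_pos hx]
    omega
  · exact absurd rfl h

lemma aux_dvd_sub_aeval (l : MvPolynomial σ K) (ρ : σ → MvPolynomial σ K)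
    (h : ∀ x, l ∣ X x - ρ x) (p : MvPolynomial σ K) : l ∣ p - aeval ρ p := by
  induction p using MvPolynomial.induction_on with
  | C a => simp
  | add p q hp hq =>
    rw [map_add]
    have : p + q - (aeval ρ p + aeval ρ q) = (p - aeval ρ p) + (q - aeval ρ q) := by ring
    rw [this]
    exact dvd_add hp hq
  | mul_X p x hp =>
    rw [map_mul, aeval_X]
    have : p * X x - aeval ρ p * ρ x
        = p * (X x - ρ x) + (p - aeval ρ p) * ρ x := by ring
    rw [this]
    exact dvd_add (Dvd.dvd.mul_left (h x) p) (hp.mul_right _)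

lemma aux_all_zero {d r : ℕ} (T : Fin r → Finset σ) (t : Fin r → MvPolynomial σ K)
    (hhom : ∀ i, (t i).IsHomogeneous d)
    (hsupp : ∀ i μ, μ ∈ (t i).support → ∀ x ∈ T i, 1 ≤ μ x)
    (hcard : ∀ i j, i ≠ j → d + 1 ≤ (T i).card + (T j).card)
    (hTdisj : ∀ i j, i ≠ j → Disjoint (T i) (T j))
    (hsum : ∑ i, t i = 0) : ∀ i, t i = 0 := by
  classical
  intro i
  by_contra h
  obtain ⟨μ, hμ⟩ : (t i).support.Nonempty := by
    rwa [Finset.nonempty_iff_ne_empty, Ne, MvPolynomial.support_eq_empty]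
  have hdegμ : μ.degree = d := by
    rw [Finsupp.degree_eq_weight_one]
    exact hhom i (MvPolynomial.mem_support_iff.mp hμ)
  have key : ∀ j, j ≠ i → coeff μ (t j) = 0 := by
    intro j hj
    by_contra hc
    have hμj : μ ∈ (t j).support := MvPolynomial.mem_support_iff.mpr hc
    have hsubset : T i ∪ T j ⊆ μ.support := by
      intro x hx
      rw [Finsupp.mem_support_iff, ← Nat.one_le_iff_ne_zero]
      rcases Finset.mem_union.mp hx with hx | hx
      · exact hsupp i μ hμ x hx
      · exact hsupp j μ hμj x hx
    have h1 : (T i ∪ T j).card ≤ ∑ x ∈ T i ∪ T j, μ x := by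
      calc (T i ∪ T j).card = ∑ _x ∈ T i ∪ T j, 1 := by simp
        _ ≤ ∑ x ∈ T i ∪ T j, μ x := by
          apply Finset.sum_le_sum
          intro x hx
          rcases Finset.mem_union.mp hx with hx | hx
          · exact hsupp i μ hμ x hx
          · exact hsupp j μ hμj x hx
    have h2 : ∑ x ∈ T i ∪ T j, μ x ≤ ∑ x ∈ μ.support, μ x :=
      Finset.sum_le_sum_of_subset hsubset
    have h3 : (T i ∪ T j).card = (T i).card + (T j).card :=
      Finset.card_union_of_disjoint (hTdisj i j (Ne.symm hj))
    have h4 := hcard i j (Ne.symm hj)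
    have h5 : ∑ x ∈ μ.support, μ x = d := hdegμ
    omega
  have hco := congrArg (coeff μ) hsum
  rw [MvPolynomial.coeff_sum, coeff_zero, Finset.sum_eq_single i (fun j _ hj => key j hj)
    (fun hi => absurd (Finset.mem_univ i) hi)] at hco
  exact MvPolynomial.mem_support_iff.mp hμ hco

end Aux

theorem stmt_1 {K σ : Type*} [Field K] [IsAlgClosed K] (d r : ℕ)
    (S : Fin r → Finset σ) (hdisj : Pairwise (Function.onFun Disjoint S))
    (hmono : Monotone fun i => (S i).card)
    (hle : ∀ i, (S i).card ≤ d)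
    (hdeg : ∀ i j, i ≠ j → d + 2 ≤ (S i).card + (S j).card)
    (f : Fin r → MvPolynomial σ K) (hf : ∀ i, (f i).IsHomogeneous (d - (S i).card))
    (l : MvPolynomial σ K) (hl : l.IsHomogeneous 1)
    (hdvd : l ∣ ∑ i, f i * ∏ x ∈ S i, X x) :
    ∀ i, l ∣ ∏ x ∈ S i, X x ∨ l ∣ f i := by
  classical
  have hprodhom : ∀ i, (∏ x ∈ S i, (X x : MvPolynomial σ K)).IsHomogeneous (S i).card := by
    intro i
    have : ((S i).card : ℕ) = ∑ _x ∈ S i, 1 := by simp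
    rw [this]
    exact IsHomogeneous.prod _ _ _ (fun x _ => isHomogeneous_X K x)
  have hprodne : ∀ i, (∏ x ∈ S i, (X x : MvPolynomial σ K)) ≠ 0 := by
    intro i
    exact Finset.prod_ne_zero_iff.mpr (fun x _ => X_ne_zero x)
  have hthom : ∀ i, (f i * ∏ x ∈ S i, X x).IsHomogeneous d := by
    intro i
    have := (hf i).mul (hprodhom i)
    rwa [Nat.sub_add_cancel (hle i)] at this
  by_cases hl0 : l = 0
  · subst hl0
    rw [zero_dvd_iff] at hdvd
    have hall := aux_all_zero S (fun i => f i * ∏ x ∈ S i, X x) hthom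
      (fun i μ hμ => aux_support_mul_prod_X hμ)
      (fun i j hij => by have := hdeg i j hij; omega)
      (fun i j hij => hdisj hij) hdvd
    intro i
    right
    rw [zero_dvd_iff]
    rcases mul_eq_zero.mp (hall i) with h | h
    · exact h
    · exact absurd h (Finset.prod_ne_zero_iff.mpr (fun x _ => X_ne_zero x))
  · -- l ≠ 0 : extract a variable y with nonzero coefficient
    obtain ⟨μ₀, hμ₀⟩ : l.support.Nonempty := by
      rwa [Finset.nonempty_iff_ne_empty, Ne, MvPolynomial.support_eq_empty]
    have hdeg₀ : μ₀.degree = 1 := by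
      rw [Finsupp.degree_eq_weight_one]
      exact hl (MvPolynomial.mem_support_iff.mp hμ₀)
    obtain ⟨y, rfl⟩ := aux_degree_one hdeg₀
    set c : K := coeff (Finsupp.single y 1) l with hc_def
    have hc : c ≠ 0 := MvPolynomial.mem_support_iff.mp hμ₀
    set g : MvPolynomial σ K := X y - C c⁻¹ * l with hg_def
    set ρ : σ → MvPolynomial σ K := fun x => if x = y then g else X x with hρ_def
    have hdvdX : ∀ x, l ∣ X x - ρ x := by
      intro x
      by_cases hxy : x = y
      · subst hxy
        simp only [hρ_def, if_pos rfl, hg_def]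
        have : X x - (X x - C c⁻¹ * l) = C c⁻¹ * l := by ring
        rw [this]
        exact Dvd.intro_left _ rfl
      · simp [hρ_def, hxy]
    have hCc : (C c : MvPolynomial σ K) * C c⁻¹ = 1 := by
      rw [← C_mul, mul_inv_cancel₀ hc, C_1]
    -- l' := l - C c * X y does not involve y
    set l' : MvPolynomial σ K := l - C c * X y with hl'_def
    have hl'hom : l'.IsHomogeneous 1 := hl.sub (isHomogeneous_C_mul_X c y)
    have hl'y : y ∉ l'.vars := by
      intro hy
      obtain ⟨μ, hμ, hyμ⟩ := (mem_vars y).mp hy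
      have hdegμ : μ.degree = 1 := by
        rw [Finsupp.degree_eq_weight_one]
        exact hl'hom (MvPolynomial.mem_support_iff.mp hμ)
      obtain ⟨z, rfl⟩ := aux_degree_one hdegμ
      have hzy : z = y := by
        by_contra hzy
        simp [Finsupp.single_apply, hzy] at hyμ
        exact hzy hyμ.symm
      subst hzy
      have : coeff (Finsupp.single z 1) l' = 0 := by
        simp [hl'_def, coeff_sub, ← hc_def, MvPolynomial.coeff_C_mul, MvPolynomial.coeff_X]
      exact MvPolynomial.mem_support_iff.mp hμ this
    have haeval_l' : aeval ρ l' = l' := by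
      have : aeval ρ l' = aeval X l' := by
        rw [aeval_def, aeval_def]
        apply eval₂Hom_congr' rfl _ rfl
        intro i hi _
        have hiy : i ≠ y := fun h => hl'y (h ▸ hi)
        simp [hρ_def, hiy]
      rw [this, aeval_X_left_apply]
    have haeval_l : aeval ρ l = 0 := by
      have hexp : l = C c * X y + l' := by rw [hl'_def]; ring
      have hXy : aeval ρ (X y : MvPolynomial σ K) = g := by
        rw [aeval_X]; simp [hρ_def]
      calc aeval ρ l = aeval ρ (C c * X y + l') := by rw [← hexp]
        _ = C c * g + l' := by rw [map_add, map_mul, algHom_C, hXy, haeval_l', MvPolynomial.algebraMap_eq]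
        _ = C c * X y - (C c * C c⁻¹) * l + (l - C c * X y) := by
            rw [hg_def, hl'_def]; ring
        _ = 0 := by rw [hCc]; ring
    have haevalF : aeval ρ (∑ i, f i * ∏ x ∈ S i, X x) = 0 := by
      obtain ⟨q, hq⟩ := hdvd
      rw [hq, map_mul, haeval_l, zero_mul]
    have hg1 : g.IsHomogeneous 1 := by
      rw [hg_def]
      exact (isHomogeneous_X K y).sub (hl.C_mul c⁻¹)
    have hρhom : ∀ x, (ρ x).IsHomogeneous 1 := by
      intro x
      simp only [hρ_def]
      split
      · exact hg1
      · exact isHomogeneous_X K x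
    have htform : ∀ i, aeval ρ (f i * ∏ x ∈ S i, X x)
        = (aeval ρ (f i) * (if y ∈ S i then g else 1)) * ∏ x ∈ (S i).erase y, X x := by
      intro i
      rw [map_mul, map_prod]
      simp only [aeval_X]
      rw [mul_assoc]
      congr 1
      by_cases hy : y ∈ S i
      · rw [if_pos hy, ← Finset.mul_prod_erase (S i) ρ hy]
        congr 1
        · simp [hρ_def]
        · apply Finset.prod_congr rfl
          intro x hx
          simp [hρ_def, Finset.ne_of_mem_erase hx]
      · rw [if_neg hy, one_mul, Finset.erase_eq_of_notMem hy]
        apply Finset.prod_congr rfl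
        intro x hx
        have hxy : x ≠ y := fun hxe => hy (hxe ▸ hx)
        simp [hρ_def, hxy]
    have hall := aux_all_zero (K := K) (d := d)
        (fun i => (S i).erase y) (fun i => aeval ρ (f i * ∏ x ∈ S i, X x))
        (fun i => by simpa using (hthom i).aeval ρ hρhom)
        (fun i μ hμ => by
          have hμ' : μ ∈ (aeval ρ (f i * ∏ x ∈ S i, X x)).support := hμ
          rw [htform i] at hμ'
          exact aux_support_mul_prod_X hμ')
        (fun i j hij => by
          have hd := hdeg i j hij
          have hdS : Disjoint (S i) (S j) := hdisj hij
          show d + 1 ≤ ((S i).erase y).card + ((S j).erase y).card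
          by_cases hyi : y ∈ S i
          · have hyj : y ∉ S j := fun hyj => Finset.disjoint_left.mp hdS hyi hyj
            rw [Finset.card_erase_of_mem hyi, Finset.erase_eq_of_notMem hyj]
            have h3 : 1 ≤ (S i).card := Finset.card_pos.mpr ⟨y, hyi⟩
            omega
          · rw [Finset.erase_eq_of_notMem hyi]
            by_cases hyj : y ∈ S j
            · rw [Finset.card_erase_of_mem hyj]
              have h3 : 1 ≤ (S j).card := Finset.card_pos.mpr ⟨y, hyj⟩
              omega
            · rw [Finset.erase_eq_of_notMem hyj]
              omega)
        (fun i j hij => Disjoint.mono (Finset.erase_subset y (S i))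
          (Finset.erase_subset y (S j)) (hdisj hij))
        (by
          show ∑ i, aeval ρ (f i * ∏ x ∈ S i, X x) = 0
          rw [← map_sum]; exact haevalF)
    -- conclude
    intro i
    have hti : aeval ρ (f i * ∏ x ∈ S i, X x) = 0 := hall i
    rw [htform i] at hti
    rcases mul_eq_zero.mp hti with h | h
    · rcases mul_eq_zero.mp h with h | h
      · right
        have := aux_dvd_sub_aeval l ρ hdvdX (f i)
        rwa [h, sub_zero] at this
      · by_cases hy : y ∈ S i
        · rw [if_pos hy] at h
          left
          have hXy : l ∣ X y := by
            have h2 : (X y : MvPolynomial σ K) - C c⁻¹ * l = 0 := by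
              rw [← hg_def]; exact h
            rw [sub_eq_zero.mp h2]
            exact Dvd.intro_left _ rfl
          exact hXy.trans (Finset.dvd_prod_of_mem _ hy)
        · rw [if_neg hy] at h
          exact absurd h one_ne_zero
    · exact absurd h (Finset.prod_ne_zero_iff.mpr (fun x _ => X_ne_zero x))
end

section
/- Let K be an algebraically closed field and suppose x is a variable (monomial of degree 1) dividing a sum Σ_i f_i·x_i, where the x_i are pairwise coprime squarefree monomials with deg(x_1) + deg(x_2) ≥ d + 1 (where x_1, x_2 have the two smallest degrees), and the f_i are homogeneous forms of degree d - deg(x_i). Then for each index i, x divides x_i or x divides f_i. -/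
open MvPolynomial

section Aux

variable {K : Type*} {σ : Type*} [CommRing K]

private lemma aux_X_dvd_iff_coeff {v : σ} {p : MvPolynomial σ K} :
    (X v : MvPolynomial σ K) ∣ p ↔ ∀ m : σ →₀ ℕ, m v = 0 → coeff m p = 0 := by
  rw [X_dvd_iff_modMonomial_eq_zero]
  constructor
  · intro h m hm
    have h2 := congrArg (coeff m) h
    rw [coeff_modMonomial_of_not_le, coeff_zero] at h2
    · exact h2
    · rw [Finsupp.single_le_iff, hm]
      omega
  · intro h
    ext m
    rw [coeff_zero]
    by_cases hle : Finsupp.single v 1 ≤ m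
    · exact coeff_modMonomial_of_le _ hle
    · rw [coeff_modMonomial_of_not_le _ hle]
      apply h
      rw [Finsupp.single_le_iff] at hle
      omega

private lemma aux_prod_X_eq (S : Finset σ) :
    ∏ x ∈ S, (X x : MvPolynomial σ K) = monomial (∑ x ∈ S, Finsupp.single x 1) 1 := by
  classical
  induction S using Finset.cons_induction with
  | empty => simp
  | cons a s ha ih =>
    rw [Finset.prod_cons, Finset.sum_cons, ih, X, monomial_mul, mul_one]

private lemma aux_eS_apply [DecidableEq σ] (S : Finset σ) (y : σ) :
    (∑ x ∈ S, Finsupp.single x (1 : ℕ)) y = if y ∈ S then 1 else 0 := by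
  rw [Finset.sum_apply']
  simp [Finsupp.single_apply]

private lemma aux_degree_add (a b : σ →₀ ℕ) :
    Finsupp.degree (a + b) = Finsupp.degree a + Finsupp.degree b := by
  simp [Finsupp.degree_eq_weight_one, map_add]

private lemma aux_degree_eS (S : Finset σ) :
    Finsupp.degree (∑ x ∈ S, Finsupp.single x (1 : ℕ)) = S.card := by
  rw [Finsupp.degree_eq_weight_one, map_sum]
  rw [Finset.sum_congr rfl fun x _ => ?_, Finset.sum_const, smul_eq_mul, mul_one]
  rw [Finsupp.weight_apply, Finsupp.sum_single_index] <;> simp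

end Aux

theorem stmt_2 {K σ : Type*} [Field K] [IsAlgClosed K] (d r : ℕ)
    (S : Fin r → Finset σ) (hdisj : Pairwise (Function.onFun Disjoint S))
    (hmono : Monotone fun i => (S i).card)
    (hle : ∀ i, (S i).card ≤ d)
    (hdeg : ∀ i j, i ≠ j → d + 1 ≤ (S i).card + (S j).card)
    (f : Fin r → MvPolynomial σ K) (hf : ∀ i, (f i).IsHomogeneous (d - (S i).card))
    (v : σ)
    (hdvd : (X v : MvPolynomial σ K) ∣ ∑ i, f i * ∏ x ∈ S i, X x) :
    ∀ i, (X v : MvPolynomial σ K) ∣ ∏ x ∈ S i, X x ∨ (X v : MvPolynomial σ K) ∣ f i := by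
  classical
  intro i
  by_cases hvi : v ∈ S i
  · exact Or.inl (Finset.dvd_prod_of_mem _ hvi)
  right
  rw [aux_X_dvd_iff_coeff]
  intro m hm
  set e : Fin r → (σ →₀ ℕ) := fun j => ∑ x ∈ S j, Finsupp.single x 1 with he
  have heapp : ∀ j y, e j y = if y ∈ S j then 1 else 0 := fun j y => aux_eS_apply _ y
  have hmei : (m + e i) v = 0 := by
    simp [Finsupp.add_apply, hm, heapp i v, hvi]
  -- the coefficient of m + e i in the big sum vanishes
  have hsum0 : coeff (m + e i) (∑ j, f j * ∏ x ∈ S j, X x) = 0 := by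
    obtain ⟨q, hq⟩ := hdvd
    rw [hq, coeff_X_mul', if_neg]
    simp [Finsupp.mem_support_iff, hmei]
  rw [coeff_sum] at hsum0
  have hterm : ∀ j ∈ Finset.univ (α := Fin r), j ≠ i →
      coeff (m + e i) (f j * ∏ x ∈ S j, X x) = 0 := by
    intro j _ hji
    rw [aux_prod_X_eq, coeff_mul_monomial']
    by_cases hvj : v ∈ S j
    · rw [if_neg]
      intro hle'
      have := hle' v
      rw [heapp j v, if_pos hvj, hmei] at this
      omega
    · have hej : (∑ x ∈ S j, Finsupp.single x (1:ℕ)) = e j := rfl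
      rw [hej]
      by_cases hle' : e j ≤ m + e i
      · rw [if_pos hle']
        -- e j ≤ m since S j and S i are disjoint
        have hejm : e j ≤ m := by
          intro y
          have hy := hle' y
          rw [Finsupp.add_apply] at hy
          by_cases hyj : y ∈ S j
          · have hyi : y ∉ S i := fun hyi => Finset.disjoint_left.mp
              (hdisj hji) hyj hyi
            rw [heapp i y, if_neg hyi] at hy
            omega
          · rw [heapp j y, if_neg hyj]
            omega
        by_cases hc : coeff (m + e i - e j) (f j) = 0
        · rw [hc, zero_mul]
        · exfalso
          -- degree computation gives a contradiction
          have hdj : Finsupp.degree (m + e i - e j) = d - (S j).card := by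
            by_contra hne
            exact hc ((hf j).coeff_eq_zero hne)
          have hsplit : Finsupp.degree (m + e i - e j) + Finsupp.degree (e j)
              = Finsupp.degree (m + e i) := by
            rw [← aux_degree_add, tsub_add_cancel_of_le hle']
          have hsplit2 : Finsupp.degree m + Finsupp.degree (e i)
              = Finsupp.degree (m + e i) := (aux_degree_add m (e i)).symm
          have hejm' : Finsupp.degree (e j) ≤ Finsupp.degree m := by
            have : m = (m - e j) + e j := (tsub_add_cancel_of_le hejm).symm
            rw [this, aux_degree_add]; omega
          have hdi : Finsupp.degree (e i) = (S i).card := aux_degree_eS (S i)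
          have hdjc : Finsupp.degree (e j) = (S j).card := aux_degree_eS (S j)
          have h1 := hdeg i j (Ne.symm hji)
          have h2 := hle i
          have h3 := hle j
          omega
      · rw [if_neg hle']
  rw [Finset.sum_eq_single_of_mem i (Finset.mem_univ i) hterm] at hsum0
  have hei : (∑ x ∈ S i, Finsupp.single x (1:ℕ)) = e i := rfl
  rw [aux_prod_X_eq, coeff_mul_monomial', hei, if_pos le_add_self,
    add_tsub_cancel_right, mul_one] at hsum0
  exact hsum0
end

section
/- Suppose bl = Σ_{i=1}^r f_i·x_i with r ≥ 2, where bl is a product of d linear forms having λ distinct linear factors (up to scaling), the x_i are pairwise coprime squarefree monomials, and the f_i are forms of degree d - deg(x_i). If deg(x_1)·deg(x_2) > λ (where x_1, x_2 are the two monomials of smallest degree), then there is a variable x dividing both bl and one of the x_i. -/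
open MvPolynomial


lemma deg_one_single {σ : Type*} [DecidableEq σ] (m : σ →₀ ℕ) (h : Finsupp.degree m = 1) :
    ∃ v, m = Finsupp.single v 1 := by
  have h0 : m ≠ 0 := by intro e; rw [e, map_zero] at h; omega
  obtain ⟨v, hv⟩ := Finsupp.support_nonempty_iff.mpr h0
  refine ⟨v, ?_⟩
  have hv1 : 1 ≤ m v := Nat.one_le_iff_ne_zero.mpr (Finsupp.mem_support_iff.mp hv)
  have hsum : ∑ u ∈ m.support, m u = 1 := h
  have hsplit : m v + ∑ u ∈ m.support.erase v, m u = ∑ u ∈ m.support, m u :=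
    Finset.add_sum_erase _ m hv
  have hrest : ∑ u ∈ m.support.erase v, m u = 0 := by omega
  have hmv : m v = 1 := by omega
  ext u
  rcases eq_or_ne u v with rfl | hu
  · simp [hmv]
  · rw [Finsupp.single_eq_of_ne' (Ne.symm hu)]
    by_contra hne
    exact hne (Finset.sum_eq_zero_iff.mp hrest u
      (Finset.mem_erase.mpr ⟨hu, Finsupp.mem_support_iff.mpr hne⟩))

lemma supp_killed {K σ : Type*} [Field K] [DecidableEq σ] (p : MvPolynomial σ K)
    (hp : p.IsHomogeneous 1) (g : σ → MvPolynomial σ K) (hg : ∀ v, g v = 0 ∨ g v = X v)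
    (h0 : aeval g p = 0) : ∀ m ∈ p.support, ∃ v, m = Finsupp.single v 1 ∧ g v = 0 := by
  intro m hm
  have hdeg : ∀ m' ∈ p.support, Finsupp.degree m' = 1 := by
    intro m' hm'
    have := hp (mem_support_iff.mp hm')
    rwa [Pi.one_def, ← Finsupp.degree_eq_weight_one] at this
  obtain ⟨v, rfl⟩ := deg_one_single m (hdeg m hm)
  refine ⟨v, rfl, ?_⟩
  rcases hg v with h | h
  · exact h
  exfalso
  have hterm : ∀ m' ∈ p.support, coeff (Finsupp.single v 1) (aeval g (monomial m' (coeff m' p)))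
      = if m' = Finsupp.single v 1 then coeff m' p else 0 := by
    intro m' hm'
    obtain ⟨w, rfl⟩ := deg_one_single m' (hdeg m' hm')
    rcases hg w with h' | h'
    · rcases eq_or_ne (Finsupp.single w (1:ℕ)) (Finsupp.single v 1) with he | he
      · have hwv : w = v := (Finsupp.single_left_inj one_ne_zero).mp he
        exfalso
        rw [hwv, h] at h'
        exact X_ne_zero v h'
      · rw [if_neg he, ← C_mul_X_eq_monomial, map_mul, aeval_X, h', mul_zero, coeff_zero]
    · rw [← C_mul_X_eq_monomial, map_mul, aeval_X, h', aeval_C, algebraMap_eq,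
        C_mul_X_eq_monomial, coeff_monomial]
  have hco : coeff (Finsupp.single v 1) (aeval g p) = coeff (Finsupp.single v 1) p := by
    conv_lhs => rw [as_sum p, map_sum, coeff_sum]
    rw [Finset.sum_congr rfl hterm, Finset.sum_ite_eq' p.support _ _, if_pos hm]
  rw [h0, coeff_zero] at hco
  exact mem_support_iff.mp hm hco.symm

theorem stmt_3 {K σ : Type*} [Field K] [IsAlgClosed K] (d r : ℕ) (hr : 2 ≤ r)
    (l : Fin d → MvPolynomial σ K) (hl : ∀ j, (l j).IsHomogeneous 1)
    (hne : (∏ j, l j) ≠ 0)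
    -- `T` indexes a set of representatives of the distinct linear factors of `bl = ∏ l j`
    -- up to scaling; `T.card` is the number `λ` of distinct factors.
    (T : Finset (Fin d)) (hT : ∀ j, ∃ t ∈ T, ∃ c : K, l j = c • l t)
    (S : Fin r → Finset σ) (hdisj : Pairwise (Function.onFun Disjoint S))
    (hmono : Monotone fun i => (S i).card) (hle : ∀ i, (S i).card ≤ d)
    (f : Fin r → MvPolynomial σ K) (hf : ∀ i, (f i).IsHomogeneous (d - (S i).card))
    (heq : (∏ j, l j) = ∑ i, f i * ∏ x ∈ S i, X x)
    (hlam : T.card < (S ⟨0, by omega⟩).card * (S ⟨1, by omega⟩).card) :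
    ∃ v : σ, (X v : MvPolynomial σ K) ∣ ∏ j, l j ∧ ∃ i, v ∈ S i := by
  classical
  by_contra hcon
  push_neg at hcon
  set i0 : Fin r := ⟨0, by omega⟩ with hi0
  set i1 : Fin r := ⟨1, by omega⟩ with hi1
  set s0 := (S i0).card with hs0
  set s1 := (S i1).card with hs1
  -- each l j is nonzero
  have hlne : ∀ j, l j ≠ 0 := by
    intro j hj
    exact hne (Finset.prod_eq_zero (Finset.mem_univ j) hj)
  -- all S i nonempty
  have hs0pos : 0 < s0 := by
    rcases Nat.eq_zero_or_pos s0 with h | h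
    · rw [h] at hlam; omega
    · exact h
  have hSpos : ∀ i, 0 < (S i).card := by
    intro i
    have : s0 ≤ (S i).card := hmono (show i0 ≤ i from Nat.zero_le _)
    omega
  -- two smallest cards bound below products of two distinct cards
  have hpairs : ∀ i j : Fin r, i ≠ j → s0 * s1 ≤ (S i).card * (S j).card := by
    have key : ∀ i j : Fin r, i < j → s0 * s1 ≤ (S i).card * (S j).card := by
      intro i j hij
      have h1 : s0 ≤ (S i).card := hmono (show i0 ≤ i from Nat.zero_le _)
      have h2 : s1 ≤ (S j).card := hmono (show i1 ≤ j by
        have h' : (i : ℕ) < (j : ℕ) := hij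
        show (1 : ℕ) ≤ (j : ℕ); omega)
      exact Nat.mul_le_mul h1 h2
    intro i j hij
    rcases lt_or_gt_of_ne hij with h | h
    · exact key i j h
    · rw [Nat.mul_comm (S i).card]; exact key j i h
  -- the killing substitution
  set g : (Fin r → σ) → σ → MvPolynomial σ K :=
    fun w v => if ∃ i, w i = v then 0 else X v with hg_def
  have hgcases : ∀ w v, g w v = 0 ∨ g w v = X v := by
    intro w v
    by_cases h : ∃ i, w i = v
    · left; simp [hg_def, h]
    · right; simp [hg_def, h]
  have hgzero : ∀ w v, g w v = 0 → ∃ i, w i = v := by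
    intro w v h
    by_cases hc : ∃ i, w i = v
    · exact hc
    · exfalso; rw [hg_def] at h; simp only [if_neg hc] at h; exact X_ne_zero v h
  have hgval : ∀ (w : Fin r → σ) (i : Fin r), g w (w i) = 0 := by
    intro w i
    have hex : ∃ j, w j = w i := ⟨i, rfl⟩
    simp [hg_def, hex]
  -- key: every transversal kills some factor indexed in T
  have key : ∀ w ∈ Fintype.piFinset S, ∃ t ∈ T, aeval (g w) (l t) = 0 := by
    intro w hw
    have hw' : ∀ i, w i ∈ S i := Fintype.mem_piFinset.mp hw
    have hrhs : aeval (g w) (∑ i, f i * ∏ x ∈ S i, X x) = 0 := by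
      rw [map_sum]
      refine Finset.sum_eq_zero fun i _ => ?_
      rw [map_mul]
      have hp : aeval (g w) ((∏ x ∈ S i, X x : MvPolynomial σ K)) = ∏ x ∈ S i, aeval (g w) (X x : MvPolynomial σ K) :=
        map_prod (aeval (R := K) (g w)) _ (S i)
      rw [hp, Finset.prod_eq_zero (hw' i) (by rw [aeval_X]; exact hgval w i), mul_zero]
    have hprod : ∏ j, aeval (g w) (l j) = 0 := by
      have hp : aeval (g w) (∏ j, l j) = ∏ j, aeval (g w) (l j) :=
        map_prod (aeval (R := K) (g w)) _ Finset.univ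
      rw [← hp, heq, hrhs]
    obtain ⟨j, _, hj⟩ := Finset.prod_eq_zero_iff.mp hprod
    obtain ⟨t, htT, c, hc⟩ := hT j
    have hc0 : c ≠ 0 := by
      intro h; rw [h, zero_smul] at hc; exact hlne j hc
    refine ⟨t, htT, ?_⟩
    rw [hc, map_smul, smul_eq_zero] at hj
    tauto
  -- piFinset S is nonempty
  have hpne : (Fintype.piFinset S).Nonempty := by
    rw [← Finset.card_pos, Fintype.card_piFinset]
    exact Finset.prod_pos fun i _ => hSpos i
  obtain ⟨w₀, hw₀⟩ := hpne
  obtain ⟨t₀, ht₀T, ht₀⟩ := key w₀ hw₀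
  -- the choice map
  set Φ : (Fin r → σ) → Fin d := fun w =>
    if h : ∃ t ∈ T, aeval (g w) (l t) = 0 then h.choose else t₀ with hΦ_def
  have hΦspec : ∀ w ∈ Fintype.piFinset S, Φ w ∈ T ∧ aeval (g w) (l (Φ w)) = 0 := by
    intro w hw
    have h := key w hw
    rw [hΦ_def]
    simp only [dif_pos h]
    exact ⟨h.choose_spec.1, h.choose_spec.2⟩
  set N := (Fintype.piFinset S).card with hNdef
  have hNpos : 0 < N := Finset.card_pos.mpr ⟨w₀, hw₀⟩
  have hfib : N = ∑ t ∈ T, ((Fintype.piFinset S).filter fun w => Φ w = t).card :=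
    Finset.card_eq_sum_card_fiberwise fun w hw => (hΦspec w hw).1
  -- the per-fiber bound
  have hbound : ∀ t ∈ T,
      ((Fintype.piFinset S).filter fun w => Φ w = t).card * (s0 * s1) ≤ N := by
    intro t _
    set F := (Fintype.piFinset S).filter fun w => Φ w = t with hF
    rcases F.eq_empty_or_nonempty with hFe | ⟨wa, hwa⟩
    · rw [hFe]; simp
    have hwa' := Finset.mem_filter.mp hwa
    have hkill0 : aeval (g wa) (l t) = 0 := by
      rw [← hwa'.2]; exact (hΦspec wa hwa'.1).2
    -- support of l t is nonempty
    obtain ⟨m1, hm1⟩ := (support_nonempty).mpr (hlne t)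
    obtain ⟨v1, hm1v, hgv1⟩ := supp_killed (l t) (hl t) (g wa) (hgcases wa) hkill0 m1 hm1
    obtain ⟨j1, hj1⟩ := hgzero wa v1 hgv1
    have hv1S : v1 ∈ S j1 := hj1 ▸ (Fintype.mem_piFinset.mp hwa'.1) j1
    -- there must be a second monomial in the support
    by_cases hm2e : ∃ m2 ∈ (l t).support, m2 ≠ m1
    case neg =>
      exfalso
      -- support is {m1}, so l t = C c * X v1 and X v1 divides the product
      push_neg at hm2e
      have hsupp : (l t).support = {m1} :=
        Finset.eq_singleton_iff_unique_mem.mpr ⟨hm1, hm2e⟩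
      have hlt : l t = C (coeff m1 (l t)) * X v1 := by
        conv_lhs => rw [as_sum (l t), hsupp]
        rw [Finset.sum_singleton, hm1v, C_mul_X_eq_monomial]
      have hd1 : (X v1 : MvPolynomial σ K) ∣ l t :=
        ⟨C (coeff m1 (l t)), by rw [mul_comm (X v1)]; exact hlt⟩
      have hdvd : (X v1 : MvPolynomial σ K) ∣ ∏ j, l j :=
        dvd_trans hd1 (Finset.dvd_prod_of_mem l (Finset.mem_univ t))
      exact hcon v1 hdvd j1 hv1S
    case pos =>
    obtain ⟨m2, hm2, hm21⟩ := hm2e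
    obtain ⟨v2, hm2v, hgv2⟩ := supp_killed (l t) (hl t) (g wa) (hgcases wa) hkill0 m2 hm2
    obtain ⟨j2, hj2⟩ := hgzero wa v2 hgv2
    have hv2S : v2 ∈ S j2 := hj2 ▸ (Fintype.mem_piFinset.mp hwa'.1) j2
    have hv12 : v1 ≠ v2 := by
      intro h; apply hm21; rw [hm2v, hm1v, h]
    have hj12 : j1 ≠ j2 := by
      intro h; apply hv12; rw [← hj1, ← hj2, h]
    -- every member of the fiber takes value v1 at j1 and v2 at j2
    have hfibval : ∀ w ∈ F, w j1 = v1 ∧ w j2 = v2 := by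
      intro w hw
      have hw' := Finset.mem_filter.mp hw
      have hmem : ∀ i, w i ∈ S i := Fintype.mem_piFinset.mp hw'.1
      have hkill : aeval (g w) (l t) = 0 := by
        rw [← hw'.2]; exact (hΦspec w hw'.1).2
      have claim : ∀ (m : σ →₀ ℕ) (v : σ) (j : Fin r), m ∈ (l t).support →
          m = Finsupp.single v 1 → v ∈ S j → w j = v := by
        intro m v j hmm hmv hvS
        obtain ⟨v', hv', hgv'⟩ := supp_killed (l t) (hl t) (g w) (hgcases w) hkill m hmm
        have hvv : v' = v := by
          rw [hmv] at hv'
          exact ((Finsupp.single_left_inj one_ne_zero).mp hv'.symm)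
        obtain ⟨i, hi⟩ := hgzero w v' hgv'
        rw [hvv] at hi
        have hij : i = j := by
          by_contra hij
          have hd := hdisj hij
          exact Finset.disjoint_left.mp hd (hi ▸ hmem i) hvS
        rw [← hij, hi]
      exact ⟨claim m1 v1 j1 hm1 hm1v hv1S, claim m2 v2 j2 hm2 hm2v hv2S⟩
    -- injection F × (S j1 × S j2) ↪ piFinset S
    have hinj : (F ×ˢ (S j1 ×ˢ S j2)).card ≤ N := by
      rw [hNdef]
      refine Finset.card_le_card_of_injOn
        (fun p => Function.update (Function.update p.1 j1 p.2.1) j2 p.2.2) ?_ ?_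
      · rintro ⟨w, a, b⟩ hp
        simp only [Finset.mem_coe, Finset.mem_product] at hp
        obtain ⟨hwF, haS, hbS⟩ := hp
        have hmem : ∀ i, w i ∈ S i := Fintype.mem_piFinset.mp (Finset.mem_filter.mp hwF).1
        rw [Finset.mem_coe, Fintype.mem_piFinset]
        intro i
        dsimp only
        rcases eq_or_ne i j2 with rfl | hij2
        · simp only [Function.update_self]; exact hbS
        · rw [Function.update_of_ne hij2]
          rcases eq_or_ne i j1 with rfl | hij1
          · simp only [Function.update_self]; exact haS
          · rw [Function.update_of_ne hij1]; exact hmem i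
      · rintro ⟨w, a, b⟩ hp ⟨w', a', b'⟩ hp' hE
        simp only [Finset.mem_coe, Finset.mem_product] at hp hp'
        obtain ⟨hwF, haS, hbS⟩ := hp
        obtain ⟨hwF', haS', hbS'⟩ := hp'
        have hb : b = b' := by
          have := congr_fun hE j2
          simpa using this
        have ha : a = a' := by
          have := congr_fun hE j1
          dsimp only at this
          rwa [Function.update_of_ne hj12, Function.update_of_ne hj12,
            Function.update_self, Function.update_self] at this
        have hw : w = w' := by
          funext i
          rcases eq_or_ne i j1 with rfl | hij1
          · rw [(hfibval w hwF).1, (hfibval w' hwF').1]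
          rcases eq_or_ne i j2 with rfl | hij2
          · rw [(hfibval w hwF).2, (hfibval w' hwF').2]
          have := congr_fun hE i
          dsimp only at this
          rwa [Function.update_of_ne hij2, Function.update_of_ne hij2,
            Function.update_of_ne hij1, Function.update_of_ne hij1] at this
        rw [hw, ha, hb]
    calc F.card * (s0 * s1) ≤ F.card * ((S j1).card * (S j2).card) :=
          Nat.mul_le_mul_left _ (hpairs j1 j2 hj12)
      _ = (F ×ˢ (S j1 ×ˢ S j2)).card := by
          rw [Finset.card_product, Finset.card_product]
      _ ≤ N := hinj
  -- final counting contradiction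
  have : N * (s0 * s1) < N * (s0 * s1) := by
    calc N * (s0 * s1) = ∑ t ∈ T, ((Fintype.piFinset S).filter fun w => Φ w = t).card * (s0 * s1) := by
          rw [← Finset.sum_mul, ← hfib]
      _ ≤ ∑ _t ∈ T, N := Finset.sum_le_sum hbound
      _ = T.card * N := by rw [Finset.sum_const, smul_eq_mul]
      _ < (s0 * s1) * N := Nat.mul_lt_mul_of_lt_of_le hlam (le_refl N) hNpos
      _ = N * (s0 * s1) := Nat.mul_comm _ _
  exact lt_irrefl _ this
end

section
/- Let K be an algebraically closed field. Suppose bl = f1·x1 + f2·x2 where bl is a non-squarefree product of d linear forms (i.e., some linear factor occurs with multiplicity at least 2), x1 and x2 are coprime squarefree monomials with deg(x1) + deg(x2) ≥ d + 1, and f_i are forms of degree d - deg(x_i). Then f1 = 0 or f2 = 0. -/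
open MvPolynomial

namespace Stmt4

variable {K σ : Type*} [Field K] [DecidableEq σ]

/-- The substitution killing the variable `i`. -/
noncomputable def psi (i : σ) : MvPolynomial σ K →ₐ[K] MvPolynomial σ K :=
  aeval fun v => if v = i then 0 else X v

lemma psi_X_self (i : σ) : psi (K := K) i (X i) = 0 := by simp [psi]

lemma psi_X_ne (i v : σ) (h : v ≠ i) : psi (K := K) i (X v) = X v := by simp [psi, h]

lemma psi_monomial (i : σ) (m : σ →₀ ℕ) (c : K) :
    psi i (monomial m c) = if m i = 0 then monomial m c else 0 := by
  rw [psi]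
  show aeval _ (monomial m c) = _
  rw [aeval_monomial, algebraMap_eq]
  split_ifs with h
  · rw [monomial_eq]
    congr 1
    apply Finsupp.prod_congr
    intro v hv
    rw [if_neg]
    rintro rfl
    exact (Finsupp.mem_support_iff.1 hv) h
  · have hi : i ∈ m.support := Finsupp.mem_support_iff.2 h
    rw [Finsupp.prod, Finset.prod_eq_zero hi, mul_zero]
    rw [if_pos rfl, zero_pow h]

lemma coeff_psi (i : σ) (x : MvPolynomial σ K) (m : σ →₀ ℕ) (hm : m i = 0) :
    coeff m (psi i x) = coeff m x := by
  conv_lhs => rw [← support_sum_monomial_coeff x]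
  rw [map_sum, coeff_sum]
  have hterm : ∀ m' ∈ x.support,
      coeff m (psi i (monomial m' (coeff m' x))) = if m' = m then coeff m x else 0 := by
    intro m' _
    rw [psi_monomial]
    split_ifs with h1 h2 h2
    · subst h2; rw [coeff_monomial, if_pos rfl]
    · rw [coeff_monomial, if_neg h2]
    · subst h2; exact absurd hm h1
    · rw [coeff_zero]
  rw [Finset.sum_congr rfl hterm, Finset.sum_ite_eq' x.support m (fun _ => coeff m x)]
  split_ifs with h
  · rfl
  · exact (notMem_support_iff.1 h).symm

lemma X_dvd_iff_coeff (i : σ) (x : MvPolynomial σ K) :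
    X i ∣ x ↔ ∀ m : σ →₀ ℕ, m i = 0 → coeff m x = 0 := by
  rw [X_dvd_iff_modMonomial_eq_zero]
  constructor
  · intro h m hmi
    have h2 := congrArg (coeff m) h
    rw [coeff_modMonomial_of_not_le, coeff_zero] at h2
    · exact h2
    · rw [Finsupp.single_le_iff, hmi]; omega
  · intro h
    ext m
    rw [coeff_zero]
    by_cases hle : Finsupp.single i 1 ≤ m
    · exact coeff_modMonomial_of_le x hle
    · rw [coeff_modMonomial_of_not_le x hle]
      apply h
      rw [Finsupp.single_le_iff] at hle
      omega

lemma X_dvd_of_psi_eq_zero {i : σ} {x : MvPolynomial σ K} (h : psi i x = 0) : X i ∣ x := by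
  rw [X_dvd_iff_coeff]
  intro m hm
  rw [← coeff_psi i x m hm, h, coeff_zero]

lemma psi_eq_zero_of_X_dvd {i : σ} {x : MvPolynomial σ K} (h : X i ∣ x) : psi i x = 0 := by
  obtain ⟨r, rfl⟩ := h
  rw [map_mul, psi_X_self, zero_mul]

lemma X_dvd_left_of_dvd_mul {i : σ} {p q : MvPolynomial σ K} (h : X i ∣ p * q)
    (hq : psi i q ≠ 0) : X i ∣ p := by
  have h0 := psi_eq_zero_of_X_dvd h
  rw [map_mul] at h0
  rcases mul_eq_zero.1 h0 with h' | h'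
  · exact X_dvd_of_psi_eq_zero h'
  · exact absurd h' hq

lemma psi_prod_X (i : σ) (s : Finset σ) (hi : i ∉ s) :
    psi (K := K) i (∏ v ∈ s, X v) = ∏ v ∈ s, X v := by
  rw [map_prod]
  exact Finset.prod_congr rfl fun v hv => psi_X_ne i v (by rintro rfl; exact hi hv)

lemma prod_X_ne_zero (s : Finset σ) : (∏ v ∈ s, (X v : MvPolynomial σ K)) ≠ 0 :=
  Finset.prod_ne_zero_iff.2 fun v _ => X_ne_zero v

lemma eq_zero_of_forall_X_dvd {f : MvPolynomial σ K} {e : ℕ} (hf : f.IsHomogeneous e)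
    (s : Finset σ) (he : e < s.card) (hdvd : ∀ i ∈ s, X i ∣ f) : f = 0 := by
  by_contra h0
  obtain ⟨m, hm⟩ := support_nonempty.2 h0
  have hdeg : m.degree = e := by
    by_contra hne
    exact (mem_support_iff.1 hm) (hf.coeff_eq_zero hne)
  have hsub : s ⊆ m.support := by
    intro i hi
    rw [Finsupp.mem_support_iff]
    intro hmi
    exact (mem_support_iff.1 hm) ((X_dvd_iff_coeff i f).1 (hdvd i hi) m hmi)
  have hcard : s.card ≤ m.degree := by
    rw [Finsupp.degree]
    calc s.card = ∑ _i ∈ s, 1 := by simp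
      _ ≤ ∑ i ∈ s, m i := Finset.sum_le_sum fun i hi =>
          Nat.one_le_iff_ne_zero.2 (Finsupp.mem_support_iff.1 (hsub hi))
      _ ≤ ∑ i ∈ m.support, m i := Finset.sum_le_sum_of_subset hsub
  omega

lemma degree_one_single (m : σ →₀ ℕ) (h : m.degree = 1) : ∃ v, m = Finsupp.single v 1 := by
  have hne : m.support.Nonempty := by
    rw [Finsupp.support_nonempty_iff]
    rintro rfl
    simp at h
  obtain ⟨v, hv⟩ := hne
  have h1 : 1 ≤ m v := Nat.one_le_iff_ne_zero.2 (Finsupp.mem_support_iff.1 hv)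
  refine ⟨v, ?_⟩
  ext w
  rcases eq_or_ne w v with rfl | hw
  · have := Finsupp.le_degree w m
    simp only [Finsupp.single_eq_same]
    omega
  · rw [Finsupp.single_eq_of_ne' (Ne.symm hw)]
    by_contra hmw
    have hwmem : w ∈ m.support := Finsupp.mem_support_iff.2 hmw
    have h2 : m v + m w ≤ m.degree := by
      rw [Finsupp.degree_apply, ← Finset.add_sum_erase _ _ hv]
      exact Nat.add_le_add_left
        (Finset.single_le_sum (fun _ _ => Nat.zero_le _) (Finset.mem_erase.2 ⟨hw, hwmem⟩)) _
    omega

variable {p : MvPolynomial σ K}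

lemma mem_vars_iff_single (hp : p.IsHomogeneous 1) (v : σ) :
    v ∈ p.vars ↔ Finsupp.single v 1 ∈ p.support := by
  rw [mem_vars]
  constructor
  · rintro ⟨m, hm, hvm⟩
    have hd : m.degree = 1 := by
      by_contra hne
      exact (mem_support_iff.1 hm) (hp.coeff_eq_zero hne)
    obtain ⟨w, rfl⟩ := degree_one_single m hd
    rw [Finsupp.support_single_ne_zero _ one_ne_zero, Finset.mem_singleton] at hvm
    subst hvm
    exact hm
  · intro h
    exact ⟨_, h, by
      rw [Finsupp.support_single_ne_zero _ one_ne_zero]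
      exact Finset.mem_singleton_self v⟩

lemma eq_sum_vars (hp : p.IsHomogeneous 1) :
    p = ∑ v ∈ p.vars, C (coeff (Finsupp.single v 1) p) * X v := by
  ext m
  rw [coeff_sum]
  simp only [coeff_C_mul, coeff_X']
  by_cases hm : ∃ w, m = Finsupp.single w 1
  · obtain ⟨w, rfl⟩ := hm
    rw [Finset.sum_eq_single w]
    · rw [if_pos rfl, mul_one]
    · intro v _ hvw
      rw [if_neg, mul_zero]
      intro hh
      exact hvw ((Finsupp.single_left_inj one_ne_zero).1 hh)
    · intro hw
      rw [if_pos rfl, mul_one]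
      exact notMem_support_iff.1 fun hc => hw ((mem_vars_iff_single hp w).2 hc)
  · rw [Finset.sum_eq_zero]
    · apply hp.coeff_eq_zero
      intro hd
      obtain ⟨w, rfl⟩ := degree_one_single m hd
      exact hm ⟨w, rfl⟩
    · intro v _
      rw [if_neg, mul_zero]
      intro hh
      exact hm ⟨v, hh.symm⟩

lemma vars_nonempty (hp : p.IsHomogeneous 1) (h : p ≠ 0) : p.vars.Nonempty := by
  obtain ⟨m, hm⟩ := support_nonempty.2 h
  have hd : m.degree = 1 := by
    by_contra hne
    exact (mem_support_iff.1 hm) (hp.coeff_eq_zero hne)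
  obtain ⟨v, rfl⟩ := degree_one_single m hd
  exact ⟨v, (mem_vars_iff_single hp v).2 hm⟩

lemma vars_subset_pair (hp : p.IsHomogeneous 1) (i j : σ)
    (h : aeval (fun v => if v = i ∨ v = j then (0 : MvPolynomial σ K) else X v) p = 0) :
    p.vars ⊆ {i, j} := by
  intro v hv
  rw [Finset.mem_insert, Finset.mem_singleton]
  by_contra hvij
  push_neg at hvij
  have hc : coeff (Finsupp.single v 1) p ≠ 0 :=
    mem_support_iff.1 ((mem_vars_iff_single hp v).1 hv)
  apply hc
  have h3 : aeval (fun v => if v = i ∨ v = j then 0 else X v) p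
      = ∑ w ∈ p.vars, C (coeff (Finsupp.single w 1) p) *
          (if w = i ∨ w = j then 0 else X w) := by
    conv_lhs => rw [eq_sum_vars hp]
    simp only [map_sum, map_mul, aeval_C, algebraMap_eq, aeval_X]
  rw [h3] at h
  have h2 := congrArg (coeff (Finsupp.single v 1)) h
  rw [coeff_zero, coeff_sum] at h2
  rw [Finset.sum_eq_single v] at h2
  · rwa [if_neg (by tauto), coeff_C_mul, coeff_X', if_pos rfl, mul_one] at h2
  · intro w _ hwv
    split_ifs with hij
    · rw [mul_zero, coeff_zero]
    · rw [coeff_C_mul, coeff_X', if_neg, mul_zero]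
      intro hh
      exact hwv ((Finsupp.single_left_inj one_ne_zero).1 hh)
  · intro hv'
    exact absurd hv hv'

lemma X_dvd_of_vars_single (hp : p.IsHomogeneous 1) {i : σ} (hv : p.vars = {i}) :
    X i ∣ p := by
  have h := eq_sum_vars hp
  rw [hv, Finset.sum_singleton] at h
  exact ⟨C (coeff (Finsupp.single i 1) p), by nth_rewrite 1 [h]; ring⟩

end Stmt4
theorem stmt_4 {K σ : Type*} [Field K] [IsAlgClosed K] (d : ℕ)
    (l : Fin d → MvPolynomial σ K) (hl : ∀ j, (l j).IsHomogeneous 1)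
    -- `∏ l j` is non-squarefree: two of its linear factors are proportional
    (hsq : ∃ a b : Fin d, a ≠ b ∧ ∃ c : K, l a = c • l b)
    (S1 S2 : Finset σ) (hdisj : Disjoint S1 S2)
    (h1 : S1.card ≤ d) (h2 : S2.card ≤ d)
    (hdeg : d + 1 ≤ S1.card + S2.card)
    (f1 f2 : MvPolynomial σ K)
    (hf1 : f1.IsHomogeneous (d - S1.card)) (hf2 : f2.IsHomogeneous (d - S2.card))
    (heq : (∏ j, l j) = f1 * ∏ x ∈ S1, X x + f2 * ∏ x ∈ S2, X x) :
    f1 = 0 ∨ f2 = 0 := by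
  classical
  obtain ⟨a, b, hab, c, hc⟩ := hsq
  by_cases hzero : ∃ k, l k = 0
  · -- the product is zero
    obtain ⟨k0, hk0⟩ := hzero
    have hbl : (∏ j, l j) = 0 := Finset.prod_eq_zero (Finset.mem_univ k0) hk0
    rw [hbl] at heq
    left
    apply Stmt4.eq_zero_of_forall_X_dvd hf1 S2 (by omega)
    intro j hj
    have hjS1 : j ∉ S1 := Finset.disjoint_right.1 hdisj hj
    have hneg : f1 * ∏ x ∈ S1, X x = -(f2 * ∏ x ∈ S2, X x) :=
      eq_neg_of_add_eq_zero_left heq.symm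
    have hd : X j ∣ f1 * ∏ x ∈ S1, X x := by
      rw [hneg]
      exact dvd_neg.2 (dvd_mul_of_dvd_right (Finset.dvd_prod_of_mem _ hj) f2)
    exact Stmt4.X_dvd_left_of_dvd_mul hd
      (by rw [Stmt4.psi_prod_X j S1 hjS1]; exact Stmt4.prod_X_ne_zero S1)
  · push_neg at hzero
    have cov : ∀ i ∈ S1, ∀ j ∈ S2, ∃ k, (l k).vars ⊆ {i, j} := by
      intro i hi j hj
      set g : σ → MvPolynomial σ K := fun v => if v = i ∨ v = j then 0 else X v with hg
      have hg1 : (aeval g) (∏ x ∈ S1, (X x : MvPolynomial σ K)) = 0 := by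
        rw [map_prod]
        apply Finset.prod_eq_zero hi
        rw [aeval_X, hg]
        exact if_pos (Or.inl rfl)
      have hg2 : (aeval g) (∏ x ∈ S2, (X x : MvPolynomial σ K)) = 0 := by
        rw [map_prod]
        apply Finset.prod_eq_zero hj
        rw [aeval_X, hg]
        exact if_pos (Or.inr rfl)
      have h0 : (aeval g) (∏ k, l k) = 0 := by
        rw [heq, map_add, map_mul, map_mul, hg1, hg2, mul_zero, mul_zero, add_zero]
      rw [map_prod] at h0
      obtain ⟨k, -, hk⟩ := Finset.prod_eq_zero_iff.1 h0
      exact ⟨k, Stmt4.vars_subset_pair (hl k) i j hk⟩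
    have hvne : ∀ k, (l k).vars.Nonempty := fun k => Stmt4.vars_nonempty (hl k) (hzero k)
    have hcne : c ≠ 0 := by
      rintro rfl
      rw [zero_smul] at hc
      exact hzero a hc
    have hvab : (l a).vars = (l b).vars := by
      have hsupp : (l a).support = (l b).support := by
        ext m
        rw [mem_support_iff, mem_support_iff, hc, coeff_smul, smul_eq_mul]
        exact mul_ne_zero_iff.trans (and_iff_right hcne)
      ext v
      rw [mem_vars, mem_vars, hsupp]
    have key : (∀ i ∈ S1, ∃ k, (l k).vars = {i}) ∨ (∀ j ∈ S2, ∃ k, (l k).vars = {j}) := by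
      by_contra hcon
      push_neg at hcon
      obtain ⟨⟨i0, hi0, hi0'⟩, ⟨j0, hj0, hj0'⟩⟩ := hcon
      set R := S1.filter (fun i => ∃ k, (l k).vars = {i}) with hR
      set Cc := S2.filter (fun j => ∃ k, (l k).vars = {j}) with hCc
      set E := Finset.univ.image (fun k => (l k).vars) with hE
      have hEcard : E.card ≤ d - 1 := by
        have hsub : E ⊆ (Finset.univ.erase a).image (fun k => (l k).vars) := by
          intro x hx
          rw [hE, Finset.mem_image] at hx
          rw [Finset.mem_image]
          obtain ⟨k, -, rfl⟩ := hx
          rcases eq_or_ne k a with rfl | hka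
          · exact ⟨b, Finset.mem_erase.2 ⟨Ne.symm hab, Finset.mem_univ b⟩, hvab.symm⟩
          · exact ⟨k, Finset.mem_erase.2 ⟨hka, Finset.mem_univ k⟩, rfl⟩
        calc E.card ≤ _ := Finset.card_le_card hsub
          _ ≤ (Finset.univ.erase a).card := Finset.card_image_le
          _ = d - 1 := by
              rw [Finset.card_erase_of_mem (Finset.mem_univ a), Finset.card_univ,
                Fintype.card_fin]
      have hpair : ∀ i ∈ S1 \ R, ∀ j ∈ S2 \ Cc, ∃ k, (l k).vars = {i, j} := by
        intro i hi j hj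
        rw [Finset.mem_sdiff] at hi hj
        obtain ⟨k, hk⟩ := cov i hi.1 j hj.1
        have hnotfi : (l k).vars ≠ {i} := fun h =>
          hi.2 (Finset.mem_filter.2 ⟨hi.1, ⟨k, h⟩⟩)
        have hnotfj : (l k).vars ≠ {j} := fun h =>
          hj.2 (Finset.mem_filter.2 ⟨hj.1, ⟨k, h⟩⟩)
        refine ⟨k, Finset.Subset.antisymm hk ?_⟩
        by_cases hiv : i ∈ (l k).vars
        · by_cases hjv : j ∈ (l k).vars
          · rw [Finset.insert_subset_iff]
            exact ⟨hiv, Finset.singleton_subset_iff.2 hjv⟩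
          · exfalso
            apply hnotfi
            have hsubi : (l k).vars ⊆ {i} := by
              intro w hw
              have hw2 := hk hw
              rw [Finset.mem_insert, Finset.mem_singleton] at hw2
              rcases hw2 with rfl | rfl
              · exact Finset.mem_singleton_self w
              · exact absurd hw hjv
            exact Finset.Subset.antisymm hsubi (Finset.singleton_subset_iff.2 hiv)
        · exfalso
          apply hnotfj
          have hsubj : (l k).vars ⊆ {j} := by
            intro w hw
            have hw2 := hk hw
            rw [Finset.mem_insert, Finset.mem_singleton] at hw2
            rcases hw2 with rfl | rfl
            · exact absurd hw hiv
            · exact Finset.mem_singleton_self w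
          obtain ⟨v, hv⟩ := hvne k
          have hvj := Finset.mem_singleton.1 (hsubj hv)
          subst hvj
          exact Finset.Subset.antisymm hsubj (Finset.singleton_subset_iff.2 hv)
      set T := R.image (fun i => ({i} : Finset σ)) ∪ Cc.image (fun j => ({j} : Finset σ))
          ∪ ((S1 \ R) ×ˢ (S2 \ Cc)).image (fun p => ({p.1, p.2} : Finset σ)) with hT
      have hTE : T ⊆ E := by
        intro x hx
        rw [hT, Finset.mem_union, Finset.mem_union] at hx
        rcases hx with (hx | hx) | hx
        · rw [Finset.mem_image] at hx
          obtain ⟨i, hi, rfl⟩ := hx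
          obtain ⟨k, hk⟩ := (Finset.mem_filter.1 hi).2
          exact Finset.mem_image.2 ⟨k, Finset.mem_univ k, hk⟩
        · rw [Finset.mem_image] at hx
          obtain ⟨j, hj, rfl⟩ := hx
          obtain ⟨k, hk⟩ := (Finset.mem_filter.1 hj).2
          exact Finset.mem_image.2 ⟨k, Finset.mem_univ k, hk⟩
        · rw [Finset.mem_image] at hx
          obtain ⟨⟨i, j⟩, hij, rfl⟩ := hx
          rw [Finset.mem_product] at hij
          obtain ⟨k, hk⟩ := hpair i hij.1 j hij.2
          exact Finset.mem_image.2 ⟨k, Finset.mem_univ k, hk⟩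
      -- disjointness between S1-side and S2-side elements
      have hmemS1 : ∀ i ∈ S1, ∀ j ∈ S2, i ≠ j := by
        intro i hi j hj h
        exact Finset.disjoint_left.1 hdisj hi (h ▸ hj)
      have hcard1 : (R.image (fun i => ({i} : Finset σ))).card = R.card :=
        Finset.card_image_of_injective _ Finset.singleton_injective
      have hcard2 : (Cc.image (fun j => ({j} : Finset σ))).card = Cc.card :=
        Finset.card_image_of_injective _ Finset.singleton_injective
      have hcard3 : (((S1 \ R) ×ˢ (S2 \ Cc)).image
          (fun p => ({p.1, p.2} : Finset σ))).card = (S1 \ R).card * (S2 \ Cc).card := by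
        rw [Finset.card_image_of_injOn, Finset.card_product]
        rintro ⟨i, j⟩ hij ⟨i', j'⟩ hij' hEq
        rw [Finset.mem_coe, Finset.mem_product, Finset.mem_sdiff, Finset.mem_sdiff] at hij hij'
        dsimp only at hEq hij hij'
        have hiS1 : i ∈ S1 := hij.1.1
        have hjS2 : j ∈ S2 := hij.2.1
        have hiS1' : i' ∈ S1 := hij'.1.1
        have hjS2' : j' ∈ S2 := hij'.2.1
        have hi : i ∈ ({i', j'} : Finset σ) := by
          rw [← hEq]; exact Finset.mem_insert_self _ _
        rw [Finset.mem_insert, Finset.mem_singleton] at hi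
        have hii' : i = i' := by
          rcases hi with h | h
          · exact h
          · exact absurd h (hmemS1 i hiS1 j' hjS2')
        subst hii'
        have hj : j ∈ ({i, j'} : Finset σ) := by
          rw [← hEq]; exact Finset.mem_insert_of_mem (Finset.mem_singleton_self j)
        rw [Finset.mem_insert, Finset.mem_singleton] at hj
        have hjj' : j = j' := by
          rcases hj with h | h
          · exact absurd h.symm (hmemS1 i hiS1 j hjS2)
          · exact h
        subst hjj'
        rfl
      have hdisj12 : Disjoint (R.image (fun i => ({i} : Finset σ)))
          (Cc.image (fun j => ({j} : Finset σ))) := by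
        rw [Finset.disjoint_left]
        intro x hx1 hx2
        rw [Finset.mem_image] at hx1 hx2
        obtain ⟨i, hi, rfl⟩ := hx1
        obtain ⟨j, hj, hEq⟩ := hx2
        exact hmemS1 i (Finset.filter_subset _ _ hi) j (Finset.filter_subset _ _ hj)
          (Finset.singleton_injective hEq).symm
      have hdisj3 : Disjoint (R.image (fun i => ({i} : Finset σ)) ∪
          Cc.image (fun j => ({j} : Finset σ)))
          (((S1 \ R) ×ˢ (S2 \ Cc)).image (fun p => ({p.1, p.2} : Finset σ))) := by
        rw [Finset.disjoint_left]
        intro x hx1 hx2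
        rw [Finset.mem_image] at hx2
        obtain ⟨⟨i, j⟩, hij, rfl⟩ := hx2
        rw [Finset.mem_product, Finset.mem_sdiff, Finset.mem_sdiff] at hij
        have hij' : i ≠ j := hmemS1 i hij.1.1 j hij.2.1
        rw [Finset.mem_union, Finset.mem_image, Finset.mem_image] at hx1
        rcases hx1 with ⟨w, _, hw⟩ | ⟨w, _, hw⟩ <;>
        · have hiw : i ∈ ({w} : Finset σ) := by rw [hw]; exact Finset.mem_insert_self _ _
          have hjw : j ∈ ({w} : Finset σ) := by
            rw [hw]; exact Finset.mem_insert_of_mem (Finset.mem_singleton_self j)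
          rw [Finset.mem_singleton] at hiw hjw
          exact hij' (hiw.trans hjw.symm)
      have hTcard : T.card = R.card + Cc.card + (S1 \ R).card * (S2 \ Cc).card := by
        rw [hT, Finset.card_union_of_disjoint hdisj3, Finset.card_union_of_disjoint hdisj12,
          hcard1, hcard2, hcard3]
      -- counting
      have hi0R : i0 ∉ R := by
        rw [hR, Finset.mem_filter]
        rintro ⟨-, k, hk⟩
        exact hi0' k hk
      have hj0C : j0 ∉ Cc := by
        rw [hCc, Finset.mem_filter]
        rintro ⟨-, k, hk⟩
        exact hj0' k hk
      have hRS1 : R ⊆ S1 := Finset.filter_subset _ _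
      have hCS2 : Cc ⊆ S2 := Finset.filter_subset _ _
      have hRlt : R.card < S1.card :=
        Finset.card_lt_card (Finset.ssubset_iff_of_subset hRS1 |>.2 ⟨i0, hi0, hi0R⟩)
      have hClt : Cc.card < S2.card :=
        Finset.card_lt_card (Finset.ssubset_iff_of_subset hCS2 |>.2 ⟨j0, hj0, hj0C⟩)
      have hx : (S1 \ R).card = S1.card - R.card := Finset.card_sdiff_of_subset hRS1
      have hy : (S2 \ Cc).card = S2.card - Cc.card := Finset.card_sdiff_of_subset hCS2
      have hx1 : 1 ≤ (S1 \ R).card := by omega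
      have hy1 : 1 ≤ (S2 \ Cc).card := by omega
      obtain ⟨x', hx'⟩ := Nat.exists_eq_add_of_le hx1
      obtain ⟨y', hy'⟩ := Nat.exists_eq_add_of_le hy1
      have hprod : (S1 \ R).card * (S2 \ Cc).card = x' * y' + x' + y' + 1 := by
        rw [hx', hy']; ring
      have hTcard' : T.card ≤ d - 1 := le_trans (Finset.card_le_card hTE) hEcard
      omega
    rcases key with hkey | hkey
    · right
      apply Stmt4.eq_zero_of_forall_X_dvd hf2 S1 (by omega)
      intro i hi
      have hiS2 : i ∉ S2 := Finset.disjoint_left.1 hdisj hi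
      obtain ⟨k, hk⟩ := hkey i hi
      have hX : X i ∣ ∏ j, l j :=
        dvd_trans (Stmt4.X_dvd_of_vars_single (hl k) hk)
          (Finset.dvd_prod_of_mem l (Finset.mem_univ k))
      have hX1 : X i ∣ f1 * ∏ x ∈ S1, X x :=
        dvd_mul_of_dvd_right (Finset.dvd_prod_of_mem _ hi) f1
      have hX2 : X i ∣ f2 * ∏ x ∈ S2, X x := by
        have h' := dvd_sub hX hX1
        rwa [heq, add_sub_cancel_left] at h'
      exact Stmt4.X_dvd_left_of_dvd_mul hX2
        (by rw [Stmt4.psi_prod_X i S2 hiS2]; exact Stmt4.prod_X_ne_zero S2)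
    · left
      apply Stmt4.eq_zero_of_forall_X_dvd hf1 S2 (by omega)
      intro j hj
      have hjS1 : j ∉ S1 := Finset.disjoint_right.1 hdisj hj
      obtain ⟨k, hk⟩ := hkey j hj
      have hX : X j ∣ ∏ j', l j' :=
        dvd_trans (Stmt4.X_dvd_of_vars_single (hl k) hk)
          (Finset.dvd_prod_of_mem l (Finset.mem_univ k))
      have hX2 : X j ∣ f2 * ∏ x ∈ S2, X x :=
        dvd_mul_of_dvd_right (Finset.dvd_prod_of_mem _ hj) f2
      have hX1 : X j ∣ f1 * ∏ x ∈ S1, X x := by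
        have h' := dvd_sub hX hX2
        rwa [heq, add_sub_cancel_right] at h'
      exact Stmt4.X_dvd_left_of_dvd_mul hX1
        (by rw [Stmt4.psi_prod_X j S1 hjS1]; exact Stmt4.prod_X_ne_zero S1)
end

section
/- If deg(x1) + deg(x2) = d + 1 and x_1, x_2 are variables dividing the coprime squarefree monomials x1, x2 respectively, then setting f1 = x2/x_2 and f2 = x1/x_1 yields f1·x1 + f2·x2 = (x_1 + x_2)·(x1/x_1)·(x2/x_2), which is a product of d linear forms with both f1 and f2 nonzero. Hence the degree bound d+2 in the two-term vanishing statement cannot be improved to d+1. -/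
open MvPolynomial

lemma prodLinear_mul {K σ : Type*} [CommRing K] {a b : ℕ} {p q : MvPolynomial σ K}
    (hp : ProdLinear a p) (hq : ProdLinear b q) : ProdLinear (a + b) (p * q) := by
  obtain ⟨l, hl, rfl⟩ := hp
  obtain ⟨m, hm, rfl⟩ := hq
  refine ⟨fun j => Sum.elim l m (finSumFinEquiv.symm j), fun j => ?_, ?_⟩
  · rcases h : finSumFinEquiv.symm j with i | i
    · simp [h, hl i]
    · simp [h, hm i]
  · rw [← finSumFinEquiv.prod_comp]
    simp [Fintype.prod_sum_type]

lemma prodLinear_prod_X {K σ : Type*} [CommRing K] (S : Finset σ) :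
    ProdLinear S.card (∏ x ∈ S, (X x : MvPolynomial σ K)) := by
  let e := S.equivFin
  refine ⟨fun j => X (e.symm j : σ), fun j => isHomogeneous_X _ _, ?_⟩
  rw [← Finset.prod_attach S (fun x => (X x : MvPolynomial σ K))]
  exact (Equiv.prod_comp e.symm fun i => X (i : σ)).symm

theorem stmt_5 {K σ : Type*} [Field K] [DecidableEq σ] (d : ℕ)
    (S1 S2 : Finset σ) (hdisj : Disjoint S1 S2)
    (hdeg : S1.card + S2.card = d + 1)
    (v1 v2 : σ) (hv1 : v1 ∈ S1) (hv2 : v2 ∈ S2) :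
    ((∏ x ∈ S2.erase v2, X x) * (∏ x ∈ S1, X x)
        + (∏ x ∈ S1.erase v1, X x) * (∏ x ∈ S2, X x)
      = (X v1 + X v2) * (∏ x ∈ S1.erase v1, X x)
          * (∏ x ∈ S2.erase v2, (X x : MvPolynomial σ K))) ∧
    ProdLinear d ((∏ x ∈ S2.erase v2, X x) * (∏ x ∈ S1, X x)
        + (∏ x ∈ S1.erase v1, X x) * (∏ x ∈ S2, (X x : MvPolynomial σ K))) ∧
    (∏ x ∈ S2.erase v2, (X x : MvPolynomial σ K)) ≠ 0 ∧
    (∏ x ∈ S1.erase v1, (X x : MvPolynomial σ K)) ≠ 0 := by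
  have h1 : (∏ x ∈ S1, (X x : MvPolynomial σ K)) = X v1 * ∏ x ∈ S1.erase v1, X x :=
    (Finset.mul_prod_erase S1 _ hv1).symm
  have h2 : (∏ x ∈ S2, (X x : MvPolynomial σ K)) = X v2 * ∏ x ∈ S2.erase v2, X x :=
    (Finset.mul_prod_erase S2 _ hv2).symm
  have key : ((∏ x ∈ S2.erase v2, X x) * (∏ x ∈ S1, X x)
        + (∏ x ∈ S1.erase v1, X x) * (∏ x ∈ S2, X x)
      = (X v1 + X v2) * (∏ x ∈ S1.erase v1, X x)
          * (∏ x ∈ S2.erase v2, (X x : MvPolynomial σ K))) := by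
    rw [h1, h2]; ring
  refine ⟨key, ?_, ?_, ?_⟩
  · rw [key]
    have hc : 1 + ((S1.erase v1).card + (S2.erase v2).card) = d := by
      rw [Finset.card_erase_of_mem hv1, Finset.card_erase_of_mem hv2]
      have c1 := Finset.card_pos.2 ⟨v1, hv1⟩
      have c2 := Finset.card_pos.2 ⟨v2, hv2⟩
      omega
    rw [← hc, mul_assoc]
    exact prodLinear_mul
      ⟨fun _ => X v1 + X v2, fun _ => (isHomogeneous_X _ _).add (isHomogeneous_X _ _),
        by simp⟩
      (prodLinear_mul (prodLinear_prod_X _) (prodLinear_prod_X _))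
  · exact Finset.prod_ne_zero_iff.2 fun x _ => X_ne_zero x
  · exact Finset.prod_ne_zero_iff.2 fun x _ => X_ne_zero x
end

section
/- Let K be an algebraically closed field, d ≥ 3, and suppose bl_1 + ... + bl_m = x1 + ... + xm, where each bl_i is a product of d linear forms and the x_i are pairwise coprime squarefree monomials of degree d. If property C^d_{m-1} holds (for any identity Σ bl_i = Σ f_j·x_j with m-1 products on the left and pairwise degree sums of the monomials at least d+2, some f_j vanishes), then there is a permutation σ of {1,...,m} with bl_i = x_{σ(i)} for all i. -/
open MvPolynomial

/-- Property `C^d_m`: for any equation `bl₁ + ⋯ + bl_m = ∑_{i=0}^m f_i·x_i` with the `x_i`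
pairwise coprime squarefree monomials whose degrees pairwise sum to at least `d+2`,
the `bl_i` degree-`d` products of linear forms, and the `f_i` products of linear forms of
degree `d - deg x_i`, some `f_i` vanishes. -/
def PropC (σ K : Type*) [Field K] (d m : ℕ) : Prop :=
  ∀ S : Fin (m + 1) → Finset σ, Pairwise (Function.onFun Disjoint S) →
    (∀ i, (S i).card ≤ d) →
    (∀ i j, i ≠ j → d + 2 ≤ (S i).card + (S j).card) →
    ∀ bl : Fin m → MvPolynomial σ K, (∀ i, ProdLinear d (bl i)) →
    ∀ f : Fin (m + 1) → MvPolynomial σ K, (∀ i, ProdLinear (d - (S i).card) (f i)) →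
    (∑ i, bl i) = (∑ i, f i * ∏ x ∈ S i, X x) →
    ∃ i, f i = 0

namespace Stmt8Aux
variable {K σ : Type*} [Field K]

lemma single_of_mem_support {p : MvPolynomial σ K} (hp : p.IsHomogeneous 1)
    {m : σ →₀ ℕ} (hm : m ∈ p.support) : ∃ z, m = Finsupp.single z 1 := by
  have h1 : m.degree = 1 := by
    rw [Finsupp.degree_eq_weight_one]
    exact hp (MvPolynomial.mem_support_iff.mp hm)
  have hne : m.support.Nonempty := by
    rcases Finset.eq_empty_or_nonempty m.support with h | h
    · exfalso
      have : m = 0 := Finsupp.support_eq_empty.mp h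
      simp [this, Finsupp.degree] at h1
    · exact h
  obtain ⟨z, hz⟩ := hne
  refine ⟨z, Finsupp.eq_single_iff.mpr ⟨?_, ?_⟩⟩
  · intro w hw
    simp only [Finset.mem_singleton]
    by_contra hwz
    classical
    have hsub : ({z, w} : Finset σ) ⊆ m.support := by
      intro u hu
      simp only [Finset.mem_insert, Finset.mem_singleton] at hu
      rcases hu with rfl | rfl <;> assumption
    have h2 : m z + m w ≤ m.degree := by
      have := Finset.sum_le_sum_of_subset (f := fun i => m i) hsub
      rwa [Finset.sum_pair (fun h => hwz h.symm)] at this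
    have hz1 : 1 ≤ m z := Nat.one_le_iff_ne_zero.mpr (Finsupp.mem_support_iff.mp hz)
    have hw1 : 1 ≤ m w := Nat.one_le_iff_ne_zero.mpr (Finsupp.mem_support_iff.mp hw)
    omega
  · -- m z = 1
    have hsub : ({z} : Finset σ) ⊆ m.support := Finset.singleton_subset_iff.mpr hz
    have h2 : m z ≤ m.degree := by
      have := Finset.sum_le_sum_of_subset (f := fun i => m i) hsub
      rwa [Finset.sum_singleton] at this
    have hz1 : 1 ≤ m z := Nat.one_le_iff_ne_zero.mpr (Finsupp.mem_support_iff.mp hz)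
    omega

lemma aeval_fix {g : σ → MvPolynomial σ K} {p : MvPolynomial σ K} (hp : p.IsHomogeneous 1)
    (h : ∀ z, coeff (Finsupp.single z 1) p ≠ 0 → g z = X z) : aeval g p = p := by
  conv_rhs => rw [p.as_sum]
  conv_lhs => rw [p.as_sum]
  rw [map_sum]
  refine Finset.sum_congr rfl fun m hm => ?_
  obtain ⟨z, rfl⟩ := single_of_mem_support hp hm
  have hc : coeff (Finsupp.single z 1) p ≠ 0 := MvPolynomial.mem_support_iff.mp hm
  rw [aeval_monomial, Finsupp.prod_single_index (by simp), h z hc, pow_one,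
    algebraMap_eq]
  rw [show (X z : MvPolynomial σ K) = X z ^ 1 from (pow_one _).symm,
    C_mul_X_pow_eq_monomial]

lemma aeval_homog1 {g : σ → MvPolynomial σ K} (hg : ∀ z, (g z).IsHomogeneous 1)
    {p : MvPolynomial σ K} (hp : p.IsHomogeneous 1) : (aeval g p).IsHomogeneous 1 := by
  simpa using hp.aeval g hg

lemma prod_X_monomial {α : Type*} (s : Finset α) (y : α → σ) :
    (∏ a ∈ s, (X (y a) : MvPolynomial σ K)) =
      monomial (∑ a ∈ s, Finsupp.single (y a) 1) 1 := by
  classical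
  induction s using Finset.cons_induction with
  | empty => simp
  | cons a s ha ih =>
      rw [Finset.prod_cons, Finset.sum_cons, ih, X, monomial_mul, one_mul]

lemma prodlinear_aeval {d : ℕ} {g : σ → MvPolynomial σ K} (hg : ∀ z, (g z).IsHomogeneous 1)
    {p : MvPolynomial σ K} (hp : ProdLinear d p) : ProdLinear d (aeval g p) := by
  obtain ⟨l, hl, rfl⟩ := hp
  exact ⟨fun j => aeval g (l j), fun j => aeval_homog1 hg (hl j), by rw [map_prod]⟩

lemma kill {d n : ℕ} (hd : 3 ≤ d) (hC : PropC σ K d n)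
    (S : Fin (n + 1) → Finset σ) (hdisj : Pairwise (Function.onFun Disjoint S))
    (hcard : ∀ i, (S i).card = d)
    (bl : Fin (n + 1) → MvPolynomial σ K) (hbl : ∀ i, ProdLinear d (bl i))
    (heq : ∑ i, bl i = ∑ i, ∏ x ∈ S i, X x)
    (i₀ : Fin (n + 1)) (l : Fin d → MvPolynomial σ K) (hl : ∀ j, (l j).IsHomogeneous 1)
    (hprod : bl i₀ = ∏ j, l j) (t : Fin d)
    {y : σ} {c : K} (hc : coeff (Finsupp.single y 1) (l t) = c) (hc0 : c ≠ 0) :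
    l t = C c * X y := by
  classical
  set g : σ → MvPolynomial σ K := fun z => if z = y then X y - C c⁻¹ * l t else X z with hgdef
  have hgy : g y = X y - C c⁻¹ * l t := by simp [g]
  have hgz : ∀ z, z ≠ y → g z = X z := fun z hz => by simp [g, hz]
  have hgh : ∀ z, (g z).IsHomogeneous 1 := by
    intro z
    by_cases hz : z = y
    · rw [hz, hgy]
      exact (isHomogeneous_X _ _).sub ((hl t).C_mul c⁻¹)
    · rw [hgz z hz]; exact isHomogeneous_X _ _
  -- aeval g kills l t
  have hCXy : (C c * X y : MvPolynomial σ K).IsHomogeneous 1 :=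
    (isHomogeneous_X _ _).C_mul c
  have hkill : aeval g (l t) = 0 := by
    have hq : aeval g (l t - C c * X y) = l t - C c * X y := by
      apply aeval_fix ((hl t).sub hCXy)
      intro z hz
      apply hgz
      intro hzy
      subst hzy
      apply hz
      simp [coeff_sub, hc, coeff_C_mul]
    have hexp : l t = (l t - C c * X y) + C c * X y := by ring
    calc aeval g (l t) = aeval g ((l t - C c * X y) + C c * X y) := by rw [← hexp]
      _ = (l t - C c * X y) + C c * (X y - C c⁻¹ * l t) := by
            rw [map_add, hq, map_mul, aeval_C, aeval_X, hgy, algebraMap_eq]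
      _ = l t - C c * C c⁻¹ * l t := by ring
      _ = 0 := by rw [← C_mul, mul_inv_cancel₀ hc0, C_1, one_mul, sub_self]
  have hbl0 : aeval g (bl i₀) = 0 := by
    rw [hprod, map_prod]
    exact Finset.prod_eq_zero (Finset.mem_univ t) hkill
  -- the left side of PropC
  set bl' : Fin n → MvPolynomial σ K := fun k => aeval g (bl (i₀.succAbove k)) with hbl'def
  have hbl' : ∀ k, ProdLinear d (bl' k) := fun k => prodlinear_aeval hgh (hbl _)
  have hsum' : ∑ k, bl' k = ∑ j, aeval (R := K) g (∏ x ∈ S j, X x) := by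
    have h1 : ∑ i, aeval (R := K) g (bl i) = aeval (R := K) g (bl i₀) + ∑ k, bl' k :=
      Fin.sum_univ_succAbove (fun i => aeval g (bl i)) i₀
    have h2 : ∑ i, aeval (R := K) g (bl i) = ∑ j, aeval (R := K) g (∏ x ∈ S j, X x) := by
      rw [← map_sum, ← map_sum, heq]
    rw [← h2, h1, hbl0, zero_add]
  have hone : ProdLinear (0 : ℕ) (1 : MvPolynomial σ K) := by
    refine ⟨fun j => j.elim0, fun j => j.elim0, ?_⟩
    simp
  by_cases hy : ∃ j, y ∈ S j
  · obtain ⟨j₀, hj₀⟩ := hy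
    have hynot : ∀ k, k ≠ j₀ → y ∉ S k := by
      intro k hk hmem
      exact Finset.disjoint_left.mp (hdisj hk) hmem hj₀
    set S' : Fin (n + 1) → Finset σ := fun k => if k = j₀ then (S j₀).erase y else S k
      with hS'def
    have hS'sub : ∀ k, S' k ⊆ S k := by
      intro k
      by_cases hk : k = j₀ <;> simp [S', hk, Finset.erase_subset]
    have hS'card : ∀ k, (S' k).card = if k = j₀ then d - 1 else d := by
      intro k
      by_cases hk : k = j₀ <;>
        simp [S', hk, Finset.card_erase_of_mem hj₀, hcard]
    set f : Fin (n + 1) → MvPolynomial σ K := fun k => if k = j₀ then g y else 1 with hfdef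
    have happ := hC S' (fun a b hab => ((hdisj hab).mono (hS'sub a) (hS'sub b)))
      (fun k => by rw [hS'card]; split <;> omega)
      (fun a b hab => by
        rw [hS'card, hS'card]
        by_cases ha : a = j₀ <;> by_cases hb : b = j₀ <;> simp [ha, hb] at hab ⊢ <;> omega)
      bl' hbl' f
      (fun k => by
        by_cases hk : k = j₀
        · have h1 : d - (S' k).card = 1 := by rw [hS'card, if_pos hk]; omega
          have h2 : f k = g y := if_pos hk
          rw [h1, h2]
          exact ⟨fun _ => g y, fun _ => hgh y, (Fin.prod_univ_one (fun _ => g y)).symm⟩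
        · have h1 : d - (S' k).card = 0 := by rw [hS'card, if_neg hk]; omega
          have h2 : f k = 1 := if_neg hk
          rw [h1, h2]
          exact hone)
      ?_
    · obtain ⟨k, hk⟩ := happ
      have hkj : k = j₀ := by
        by_contra hkj
        simp only [f, if_neg hkj] at hk
        exact one_ne_zero hk
      subst hkj
      simp only [f, if_pos rfl, hgy, sub_eq_zero] at hk
      have : C c * X y = C c * (C c⁻¹ * l t) := by rw [← hk]
      rw [← mul_assoc, ← C_mul, mul_inv_cancel₀ hc0, C_1, one_mul] at this
      exact this.symm
    · -- the equation
      rw [hsum']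
      refine Finset.sum_congr rfl fun j _ => ?_
      by_cases hj : j = j₀
      · subst hj
        rw [map_prod]
        simp only [f, S', if_pos rfl]
        rw [← Finset.mul_prod_erase _ _ hj₀]
        congr 1
        · simp [aeval_X]
        · refine Finset.prod_congr rfl fun z hz => ?_
          rw [aeval_X, hgz z (Finset.ne_of_mem_erase hz)]
      · rw [map_prod]
        simp only [f, S', if_neg hj, one_mul]
        refine Finset.prod_congr rfl fun z hz => ?_
        rw [aeval_X, hgz z (fun h => hynot j hj (h ▸ hz))]
  · push_neg at hy
    exfalso
    have happ := hC S hdisj (fun k => (hcard k).le)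
      (fun a b hab => by rw [hcard, hcard]; omega)
      bl' hbl' (fun _ => 1)
      (fun k => by
        have h1 : d - (S k).card = 0 := by rw [hcard]; omega
        rw [h1]
        exact hone)
      ?_
    · obtain ⟨k, hk⟩ := happ
      exact one_ne_zero hk
    · rw [hsum']
      refine Finset.sum_congr rfl fun j _ => ?_
      rw [map_prod, one_mul]
      refine Finset.prod_congr rfl fun z hz => ?_
      rw [aeval_X, hgz z (fun h => hy j (h ▸ hz))]

end Stmt8Aux

theorem stmt_8 {K σ : Type*} [Field K] [IsAlgClosed K] (d m : ℕ) (hd : 3 ≤ d) (hm : 1 ≤ m)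
    (hC : PropC σ K d (m - 1))
    (S : Fin m → Finset σ) (hdisj : Pairwise (Function.onFun Disjoint S))
    (hcard : ∀ i, (S i).card = d)
    (bl : Fin m → MvPolynomial σ K) (hbl : ∀ i, ProdLinear d (bl i))
    (heq : ∑ i, bl i = ∑ i, ∏ x ∈ S i, X x) :
    ∃ e : Equiv.Perm (Fin m), ∀ i, bl i = ∏ x ∈ S (e i), X x := by
  classical
  obtain ⟨n, rfl⟩ : ∃ n, m = n + 1 := ⟨m - 1, by omega⟩
  have hC' : PropC σ K d n := by simpa using hC
  have step1 : ∀ i, ∃ (a : K) (D : σ →₀ ℕ), bl i = monomial D a := by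
    intro i
    by_cases h0 : bl i = 0
    · exact ⟨0, 0, by simp [h0]⟩
    · obtain ⟨l, hl, hprod⟩ := hbl i
      have hfac : ∀ t, ∃ cy : K × σ, l t = C cy.1 * X cy.2 := by
        intro t
        have hlt : l t ≠ 0 := by
          intro h
          exact h0 (by rw [hprod]; exact Finset.prod_eq_zero (Finset.mem_univ t) h)
        obtain ⟨mm, hmm⟩ : (l t).support.Nonempty := by
          rw [Finset.nonempty_iff_ne_empty, Ne, MvPolynomial.support_eq_empty]
          exact hlt
        obtain ⟨y, rfl⟩ := Stmt8Aux.single_of_mem_support (hl t) hmm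
        have hc0 : coeff (Finsupp.single y 1) (l t) ≠ 0 := MvPolynomial.mem_support_iff.mp hmm
        exact ⟨(coeff (Finsupp.single y 1) (l t), y),
          Stmt8Aux.kill hd hC' S hdisj hcard bl hbl heq i l hl hprod t rfl hc0⟩
      choose cy hcy using hfac
      refine ⟨∏ t, (cy t).1, ∑ t, Finsupp.single ((cy t).2) 1, ?_⟩
      rw [hprod]
      calc ∏ t, l t = ∏ t, (C ((cy t).1) * X ((cy t).2)) :=
            Finset.prod_congr rfl (fun t _ => hcy t)
        _ = (∏ t, C ((cy t).1)) * ∏ t, X ((cy t).2) := Finset.prod_mul_distrib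
        _ = C (∏ t, (cy t).1) * monomial (∑ t, Finsupp.single ((cy t).2) 1) 1 := by
            rw [← map_prod, Stmt8Aux.prod_X_monomial]
        _ = monomial (∑ t, Finsupp.single ((cy t).2) 1) (∏ t, (cy t).1) := by
            rw [C_mul_monomial, mul_one]
  choose a D hD using step1
  set E : Fin (n + 1) → (σ →₀ ℕ) := fun j => ∑ z ∈ S j, Finsupp.single z 1 with hE
  have hx : ∀ j, (∏ x ∈ S j, X x : MvPolynomial σ K) = monomial (E j) 1 := by
    intro j
    have := Stmt8Aux.prod_X_monomial (K := K) (S j) (fun z => z)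
    simpa using this
  have hEapp : ∀ j w, E j w = if w ∈ S j then 1 else 0 := by
    intro j w
    rw [hE]
    simp only [Finset.sum_apply', Finsupp.single_apply]
    rw [Finset.sum_ite_eq' (S j) w (fun _ => 1)]
  have hEne : ∀ j j', j ≠ j' → E j ≠ E j' := by
    intro j j' hjj' hEE
    obtain ⟨z, hz⟩ : (S j).Nonempty := Finset.card_pos.mp (by rw [hcard]; omega)
    have h1 : E j z = 1 := by rw [hEapp, if_pos hz]
    have h2 : E j' z = 0 := by
      rw [hEapp, if_neg]
      exact fun hmem => Finset.disjoint_left.mp (hdisj hjj') hz hmem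
    rw [hEE] at h1
    rw [h1] at h2
    exact one_ne_zero h2
  have hco : ∀ j, ∑ i, coeff (E j) (bl i) = 1 := by
    intro j
    have h1 : coeff (E j) (∑ i, bl i) = coeff (E j) (∑ i, ∏ x ∈ S i, X x) := by rw [heq]
    rw [MvPolynomial.coeff_sum, MvPolynomial.coeff_sum] at h1
    rw [h1, Finset.sum_eq_single_of_mem j (Finset.mem_univ j)]
    · rw [hx, coeff_monomial, if_pos rfl]
    · intro k _ hk
      rw [hx, coeff_monomial, if_neg (hEne k j hk)]
  have hτ : ∀ j, ∃ i, a i ≠ 0 ∧ D i = E j := by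
    intro j
    obtain ⟨i, -, hi⟩ := Finset.exists_ne_zero_of_sum_ne_zero
      (by rw [hco j]; exact one_ne_zero)
    rw [hD i, coeff_monomial] at hi
    by_cases hDi : D i = E j
    · rw [if_pos hDi] at hi
      exact ⟨i, hi, hDi⟩
    · rw [if_neg hDi] at hi
      exact absurd rfl hi
  choose τ hτa hτD using hτ
  have hinj : Function.Injective τ := by
    intro j j' h
    by_contra hne
    exact hEne j j' hne (by rw [← hτD j, ← hτD j', h])
  have hbij : Function.Bijective τ := ⟨hinj, Finite.injective_iff_surjective.mp hinj⟩
  refine ⟨(Equiv.ofBijective τ hbij).symm, fun i => ?_⟩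
  set j := (Equiv.ofBijective τ hbij).symm i with hj
  have hτj : τ j = i := by
    have h := Equiv.apply_symm_apply (Equiv.ofBijective τ hbij) i
    exact h
  have hDi : D i = E j := by rw [← hτj, hτD]
  have h1 : a i = 1 := by
    have h2 := hco j
    rw [Finset.sum_eq_single_of_mem (τ j) (Finset.mem_univ _)] at h2
    · rw [hτj, hD i, coeff_monomial, if_pos hDi] at h2
      exact h2
    · intro i' _ hi'
      obtain ⟨j', hj'⟩ := hbij.2 i'
      have hjj : j' ≠ j := fun h => hi' (by rw [← hj', h, hτj])
      rw [hD, coeff_monomial, if_neg]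
      rw [← hj', hτD j']
      exact hEne j' j hjj
  rw [hx, hD i, hDi, h1]
end

section
/- The Fano scheme F_k(X_{r,d}) of k-planes contained in the hypersurface X_{r,d} = V(Σ_{i=1}^r Π_{j=1}^d x_{ij}) ⊂ P^{rd-1} is non-empty if and only if k < r(d-1). -/
open MvPolynomial Finset Module Submodule Matrix

section FanoAux
variable {K : Type*} [Field K]





lemma finsupp_degree_one {σ : Type*} {m : σ →₀ ℕ} (h : Finsupp.degree m = 1) :
    ∃ a, m = Finsupp.single a 1 := by
  have hcard : m.support.card ≤ 1 := by
    have := Finset.card_nsmul_le_sum m.support m 1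
      (fun i hi => Nat.one_le_iff_ne_zero.2 (Finsupp.mem_support_iff.1 hi))
    rw [Finsupp.degree_apply] at h
    simpa [h] using this
  have hne : m.support.card ≠ 0 := by
    intro h0
    rw [Finset.card_eq_zero] at h0
    simp [Finsupp.degree_apply, h0] at h
  have hc1 : m.support.card = 1 := by omega
  obtain ⟨a, b, hb, hf⟩ := Finsupp.card_support_eq_one'.1 hc1
  subst hf
  refine ⟨a, ?_⟩
  have hd : Finsupp.degree (Finsupp.single a b) = b := by
    simp [Finsupp.degree_apply, Finsupp.support_single_ne_zero a hb]
  rw [hd] at h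
  rw [h]

lemma support_single_of_homog1 {n : ℕ} {y : MvPolynomial (Fin n) K}
    (h : y.IsHomogeneous 1) {m : Fin n →₀ ℕ} (hm : m ∈ y.support) :
    ∃ a, m = Finsupp.single a 1 := by
  apply finsupp_degree_one
  have := h (MvPolynomial.mem_support_iff.1 hm)
  rw [Finsupp.degree_eq_weight_one]; exact this

lemma pderiv_homog1 {n : ℕ} {y : MvPolynomial (Fin n) K} (h : y.IsHomogeneous 1)
    (β : Fin n) : pderiv β y = C (coeff (Finsupp.single β 1) y) := by
  conv_lhs => rw [y.as_sum]
  rw [map_sum]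
  have : ∀ m ∈ y.support, pderiv β (monomial m (coeff m y))
      = if m = Finsupp.single β 1 then C (coeff m y) else 0 := by
    intro m hm
    obtain ⟨a, rfl⟩ := support_single_of_homog1 h hm
    rw [pderiv_monomial]
    by_cases hab : a = β
    · subst hab
      simp [Finsupp.single_eq_same]
    · rw [if_neg (by simpa [Finsupp.single_left_inj (one_ne_zero)] using hab)]
      simp [Finsupp.single_eq_of_ne (Ne.symm hab), Finsupp.single_eq_of_ne hab]
  rw [Finset.sum_congr rfl this, Finset.sum_ite_eq' y.support (Finsupp.single β 1)
    (fun m => C (coeff m y))]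
  by_cases hmem : Finsupp.single β 1 ∈ y.support
  · rw [if_pos hmem]
  · rw [if_neg hmem, MvPolynomial.notMem_support_iff.1 hmem, map_zero]

lemma pderiv_finset_prod {σ τ : Type*} [DecidableEq τ] (b : σ) (s : Finset τ)
    (f : τ → MvPolynomial σ K) :
    pderiv b (∏ j ∈ s, f j) = ∑ j ∈ s, pderiv b (f j) * ∏ j' ∈ s.erase j, f j' := by
  induction s using Finset.induction_on with
  | empty => simp
  | @insert a s ha ih =>
      rw [Finset.prod_insert ha, pderiv_mul, ih, Finset.sum_insert ha,
        Finset.erase_insert ha, Finset.mul_sum]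
      congr 1
      refine Finset.sum_congr rfl fun j hj => ?_
      rw [Finset.erase_insert_of_ne (by rintro rfl; exact ha hj) ,
        Finset.prod_insert (fun hmem => ha (Finset.mem_of_mem_erase hmem))]
      ring







lemma la {ι : Type*} [Fintype ι] [DecidableEq ι] {n : ℕ}
    (Cm : Matrix ι (Fin n) K) (H : Matrix ι ι K)
    (hspan : ⊤ ≤ Submodule.span K (Set.range fun a => Cm a))
    (hkey : Cmᵀ * H * Cm = 0)
    (Z : Finset ι)
    (hZC : ∀ z ∈ Z, Cm z = 0)
    (hZH : ∀ z ∈ Z, ∀ x, H z x = if x = z then 1 else 0)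
    (q : ℕ) (hq : q ≤ H.rank) :
    n + n + q + Z.card ≤ Fintype.card ι + Fintype.card ι := by
  classical
  set f := (Cmᵀ).mulVecLin with hf
  have hfr : LinearMap.range f = ⊤ := by
    rw [hf, Matrix.range_mulVecLin]
    exact le_antisymm le_top hspan
  have e6 : n + finrank K (LinearMap.ker f) = Fintype.card ι := by
    have := LinearMap.finrank_range_add_finrank_ker f
    rw [hfr, finrank_top, Module.finrank_pi, Module.finrank_pi, Fintype.card_fin] at this
    exact this
  set cmap := Cm.mulVecLin with hcm
  have cinj : Function.Injective cmap := by
    rw [← LinearMap.ker_eq_bot]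
    refine (Submodule.eq_bot_iff _).2 fun v hv => ?_
    have hrow : ∀ u ∈ Submodule.span K (Set.range fun a => Cm a), u ⬝ᵥ v = 0 := by
      intro u hu
      induction hu using Submodule.span_induction with
      | mem u hu =>
          obtain ⟨a, rfl⟩ := hu
          have h0 : Cm *ᵥ v = 0 := by
            have := LinearMap.mem_ker.1 hv
            rwa [hcm, Matrix.mulVecLin_apply] at this
          have : (Cm *ᵥ v) a = 0 := by rw [h0]; rfl
          simpa [Matrix.mulVec, dotProduct] using this
      | zero => simp
      | add u w _ _ hu hw => rw [add_dotProduct, hu, hw, add_zero]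
      | smul c u _ hu => rw [smul_dotProduct, hu, smul_zero]
    funext α
    have := hrow (Pi.single α 1) (hspan trivial)
    simpa [single_dotProduct] using this
  set M := LinearMap.range cmap with hM
  have hMfin : finrank K M = n := by
    rw [hM, LinearMap.finrank_range_of_inj cinj, Module.finrank_pi, Fintype.card_fin]
  set hmap := H.mulVecLin with hh
  set h' := hmap.comp M.subtype with hh'
  have e1 : finrank K (LinearMap.range h') + finrank K (LinearMap.ker h') = n := by
    rw [← hMfin]; exact LinearMap.finrank_range_add_finrank_ker h'
  have hU1 : LinearMap.range h' = M.map hmap := by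
    rw [hh', LinearMap.range_comp, Submodule.range_subtype]
  have e2 : finrank K (LinearMap.ker h') ≤ finrank K (LinearMap.ker hmap) := by
    rw [← Submodule.finrank_map_subtype_eq M (LinearMap.ker h')]
    apply Submodule.finrank_mono
    intro x hx
    obtain ⟨⟨y, hyM⟩, hy, rfl⟩ := hx
    simpa [hh'] using hy
  have e3 : H.rank + finrank K (LinearMap.ker hmap) = Fintype.card ι := by
    have := LinearMap.finrank_range_add_finrank_ker hmap
    rw [Module.finrank_pi] at this
    exact this
  set U1 := M.map hmap with hU1d
  set U2 : Submodule K (ι → K) := Submodule.span K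
    (Set.range fun z : {x // x ∈ Z} => (Pi.single (z : ι) (1 : K) : ι → K)) with hU2
  have li : LinearIndependent K (fun z : {x // x ∈ Z} => (Pi.single (z : ι) (1 : K) : ι → K)) := by
    have hb := (Pi.basisFun K ι).linearIndependent
    have := hb.comp (fun z : {x // x ∈ Z} => (z : ι)) Subtype.val_injective
    convert this using 2 with z
    simp [Pi.basisFun_apply]
  have e4 : finrank K U2 = Z.card := by
    rw [hU2, finrank_span_eq_card li, Fintype.card_coe]
  have hU1z : ∀ x ∈ U1, ∀ z ∈ Z, x z = 0 := by
    intro x hx z hz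
    obtain ⟨w, hw, rfl⟩ := hx
    obtain ⟨v, rfl⟩ := hw
    show (H *ᵥ (Cm *ᵥ v)) z = 0
    have hrw : (H *ᵥ (Cm *ᵥ v)) z = ∑ a, H z a * (Cm *ᵥ v) a := rfl
    rw [hrw, Finset.sum_congr rfl fun a _ => by rw [hZH z hz a, ite_mul, one_mul, zero_mul],
      Finset.sum_ite_eq' Finset.univ z (fun a => (Cm *ᵥ v) a)]
    simp [Matrix.mulVec, dotProduct, hZC z hz]
  have hU2z : ∀ x ∈ U2, ∀ a, a ∉ Z → x a = 0 := by
    intro x hx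
    induction hx using Submodule.span_induction with
    | mem u hu =>
        obtain ⟨z, rfl⟩ := hu
        intro a ha
        exact Pi.single_eq_of_ne (by rintro rfl; exact ha z.2) 1
    | zero => intro a _; rfl
    | add u w _ _ hu hw => intro a ha; simp [Pi.add_apply, hu a ha, hw a ha]
    | smul c u _ hu => intro a ha; simp [Pi.smul_apply, hu a ha]
  have hinf : U1 ⊓ U2 = ⊥ := by
    refine (Submodule.eq_bot_iff _).2 fun x hx => ?_
    funext a
    by_cases ha : a ∈ Z
    · exact hU1z x hx.1 a ha
    · exact hU2z x hx.2 a ha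
  have hsup : U1 ⊔ U2 ≤ LinearMap.ker f := by
    refine sup_le ?_ ?_
    · intro x hx
      obtain ⟨w, hw, rfl⟩ := hx
      obtain ⟨v, rfl⟩ := hw
      rw [LinearMap.mem_ker]
      show (Cmᵀ).mulVec (H.mulVec (Cm.mulVec v)) = 0
      rw [Matrix.mulVec_mulVec, Matrix.mulVec_mulVec, hkey, Matrix.zero_mulVec]
    · rw [hU2, Submodule.span_le]
      rintro x ⟨z, rfl⟩
      rw [SetLike.mem_coe, LinearMap.mem_ker]
      show (Cmᵀ).mulVec (Pi.single (z : ι) 1) = 0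
      rw [Matrix.mulVec_single_one]
      exact hZC z z.2
  have e5 : finrank K U1 + finrank K U2 ≤ finrank K (LinearMap.ker f) := by
    have := Submodule.finrank_sup_add_finrank_inf_eq U1 U2
    rw [hinf, finrank_bot, add_zero] at this
    rw [← this]
    exact Submodule.finrank_mono hsup
  rw [hU1] at e1
  omega



lemma construction {K : Type*} [Field K] (r d k : ℕ) (hr : 0 < r) (hd : 2 < d)
    (hk : k < r * (d - 1)) :
    ∃ y : Fin r → Fin d → MvPolynomial (Fin (k + 1)) K,
      (∀ i j, (y i j).IsHomogeneous 1) ∧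
      (∀ α : Fin (k + 1), (X α : MvPolynomial (Fin (k + 1)) K) ∈
        Submodule.span K (Set.range fun p : Fin r × Fin d => y p.1 p.2)) ∧
      (∑ i, ∏ j, y i j) = 0 := by
  have hd1 : 0 < d - 1 := by omega
  refine ⟨fun i j => if j.val = 0 then 0
    else X ⟨min (i.val * (d - 1) + (j.val - 1)) k, by omega⟩, ?_, ?_, ?_⟩
  · intro i j
    beta_reduce
    by_cases h : j.val = 0
    · rw [if_pos h]; exact isHomogeneous_zero _ _ _
    · rw [if_neg h]; exact isHomogeneous_X _ _
  · intro α
    have ha : α.val ≤ k := by omega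
    have hin : α.val < r * (d - 1) := lt_of_le_of_lt ha hk
    have hi0 : α.val / (d - 1) < r := Nat.div_lt_of_lt_mul (by rwa [Nat.mul_comm] at hin)
    have hj0 : α.val % (d - 1) + 1 < d := by
      have := Nat.mod_lt α.val hd1; omega
    apply Submodule.subset_span
    refine ⟨(⟨α.val / (d - 1), hi0⟩, ⟨α.val % (d - 1) + 1, hj0⟩), ?_⟩
    show (if α.val % (d - 1) + 1 = 0 then 0 else X _) = X α
    rw [if_neg (by omega)]
    congr 1
    apply Fin.ext
    show min (α.val / (d - 1) * (d - 1) + (α.val % (d - 1) + 1 - 1)) k = α.val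
    have h1 := Nat.div_add_mod α.val (d - 1)
    rw [Nat.mul_comm] at h1
    generalize hw : α.val / (d - 1) * (d - 1) = w at h1 ⊢
    omega
  · refine Finset.sum_eq_zero fun i _ => Finset.prod_eq_zero
      (Finset.mem_univ (⟨0, by omega⟩ : Fin d)) (by simp)

lemma forward [IsAlgClosed K] (r d k : ℕ) (hd : 2 < d)
    (y : Fin r → Fin d → MvPolynomial (Fin (k + 1)) K)
    (hhom : ∀ i j, (y i j).IsHomogeneous 1)
    (hspan : ∀ α : Fin (k + 1), (X α : MvPolynomial (Fin (k + 1)) K) ∈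
        Submodule.span K (Set.range fun p : Fin r × Fin d => y p.1 p.2))
    (hzero : (∑ i, ∏ j, y i j) = 0) :
    k < r * (d - 1) := by
  classical
  set c : Fin r → Fin d → Fin (k + 1) → K :=
    fun i j α => coeff (Finsupp.single α 1) (y i j) with hc
  set s : Finset (Fin r) := univ.filter (fun i => ∀ j, y i j ≠ 0) with hs
  have hsmem : ∀ i, i ∈ s ↔ ∀ j, y i j ≠ 0 := by
    intro i; rw [hs, Finset.mem_filter]; simp
  set J : Fin r → Fin d := fun i =>
    if h : ∃ j, y i j = 0 then h.choose else ⟨0, by omega⟩ with hJdef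
  have hJ : ∀ i, i ∉ s → y i (J i) = 0 := by
    intro i hi
    rw [hsmem] at hi
    push_neg at hi
    show y i (if h : ∃ j, y i j = 0 then h.choose else ⟨0, by omega⟩) = 0
    rw [dif_pos hi]
    exact hi.choose_spec
  -- choose the point p
  obtain ⟨p, hp⟩ : ∃ p : Fin (k + 1) → K, ∀ i ∈ s, ∀ j, eval p (y i j) ≠ 0 := by
    have hgne : (∏ i ∈ s, ∏ j, y i j) ≠ 0 := by
      rw [Finset.prod_ne_zero_iff]
      intro i hi
      rw [Finset.prod_ne_zero_iff]
      exact fun j _ => (hsmem i).1 hi j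
    have : ∃ p, eval p (∏ i ∈ s, ∏ j, y i j) ≠ 0 := by
      by_contra h
      push_neg at h
      exact hgne (MvPolynomial.funext fun x => by rw [h x, map_zero])
    obtain ⟨p, hp⟩ := this
    refine ⟨p, fun i hi j => ?_⟩
    rw [map_prod] at hp
    have := Finset.prod_ne_zero_iff.1 hp i hi
    rw [map_prod] at this
    exact Finset.prod_ne_zero_iff.1 this j (Finset.mem_univ j)
  -- matrices
  set Cm : Matrix (Fin r × Fin d) (Fin (k + 1)) K := fun a α => c a.1 a.2 α with hCm
  set H : Matrix (Fin r × Fin d) (Fin r × Fin d) K := fun a b =>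
    if a.1 = b.1 ∧ a.1 ∈ s ∧ a.2 ≠ b.2 then
      eval p (∏ j'' ∈ (univ.erase a.2).erase b.2, y a.1 j'')
    else if a = b ∧ a.1 ∉ s ∧ a.2 = J a.1 then 1 else 0 with hH
  have hHa : ∀ a b : Fin r × Fin d, H a b =
      if a.1 = b.1 ∧ a.1 ∈ s ∧ a.2 ≠ b.2 then
        eval p (∏ j'' ∈ (univ.erase a.2).erase b.2, y a.1 j'')
      else if a = b ∧ a.1 ∉ s ∧ a.2 = J a.1 then 1 else 0 := fun a b => rfl
  -- spanning of rows of Cm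
  have hspanC : ⊤ ≤ Submodule.span K (Set.range fun a : Fin r × Fin d => Cm a) := by
    set φ : MvPolynomial (Fin (k + 1)) K →ₗ[K] (Fin (k + 1) → K) :=
      LinearMap.pi (fun α => MvPolynomial.lcoeff K (Finsupp.single α 1)) with hφ
    have hsingle : ∀ α, φ (X α) = Pi.single α 1 := by
      intro α
      funext β
      have hφa : φ (X α) β = coeff (Finsupp.single β 1) (X α) := by
        simp [hφ, MvPolynomial.lcoeff_apply]
      rw [hφa, MvPolynomial.coeff_X', Pi.single_apply]
      by_cases h : α = β
      · subst h; rw [if_pos rfl, if_pos rfl]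
      · rw [if_neg (by simpa [Finsupp.single_left_inj (one_ne_zero (α := ℕ))] using h),
          if_neg (Ne.symm h)]
    have hXmem : ∀ α, (Pi.single α 1 : Fin (k + 1) → K) ∈
        Submodule.span K (Set.range fun a : Fin r × Fin d => Cm a) := by
      intro α
      have h1 : φ (X α) ∈ Submodule.map φ
          (Submodule.span K (Set.range fun p : Fin r × Fin d => y p.1 p.2)) :=
        Submodule.mem_map_of_mem (hspan α)
      rw [Submodule.map_span, ← Set.range_comp] at h1
      have h2 : (⇑φ ∘ fun p : Fin r × Fin d => y p.1 p.2) = fun a : Fin r × Fin d => Cm a := by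
        funext a
        funext β
        rfl
      rw [h2] at h1
      rwa [hsingle α] at h1
    have htop : Submodule.span K
        (Set.range fun α => (Pi.single α 1 : Fin (k + 1) → K)) = ⊤ := by
      have hb := (Pi.basisFun K (Fin (k + 1))).span_eq
      have : ⇑(Pi.basisFun K (Fin (k + 1))) = fun α => (Pi.single α 1 : Fin (k + 1) → K) := by
        funext α
        exact funext fun β => by simp [Pi.basisFun_apply]
      rwa [this] at hb
    rw [← htop]
    exact Submodule.span_le.2 (by rintro x ⟨α, rfl⟩; exact hXmem α)
  -- the second-order identity
  have E : ∀ α β : Fin (k + 1), ∑ i, ∑ j, ∑ j' ∈ univ.erase j,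
      c i j α * (c i j' β * eval p (∏ j'' ∈ (univ.erase j).erase j', y i j'')) = 0 := by
    intro α β
    have D1 : ∑ i, ∑ j, (C (c i j α) : MvPolynomial (Fin (k + 1)) K) *
        ∏ j' ∈ univ.erase j, y i j' = 0 := by
      have h0 : ∑ i, pderiv α (∏ j, y i j) = 0 := by
        rw [← map_sum, hzero, map_zero]
      rw [← h0]
      refine Finset.sum_congr rfl fun i _ => ?_
      rw [pderiv_finset_prod]
      exact Finset.sum_congr rfl fun j _ => by rw [pderiv_homog1 (hhom i j)]
    have D2 : ∑ i, ∑ j, (C (c i j α) : MvPolynomial (Fin (k + 1)) K) *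
        ∑ j' ∈ univ.erase j, C (c i j' β) * ∏ j'' ∈ (univ.erase j).erase j', y i j'' = 0 := by
      have h0 := congrArg (pderiv β) D1
      rw [map_zero, map_sum] at h0
      rw [← h0]
      refine Finset.sum_congr rfl fun i _ => ?_
      rw [map_sum]
      refine Finset.sum_congr rfl fun j _ => ?_
      rw [pderiv_mul, pderiv_C, zero_mul, zero_add, pderiv_finset_prod]
      congr 1
      exact Finset.sum_congr rfl fun j' _ => by rw [pderiv_homog1 (hhom i j')]
    have h0 := congrArg (eval p) D2
    rw [map_zero, map_sum] at h0
    rw [← h0]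
    refine Finset.sum_congr rfl fun i _ => ?_
    rw [map_sum]
    refine Finset.sum_congr rfl fun j _ => ?_
    rw [eval_mul, eval_C, map_sum, Finset.mul_sum]
    refine Finset.sum_congr rfl fun j' _ => ?_
    rw [eval_mul, eval_C]
  have hcJ : ∀ i, i ∉ s → ∀ γ, c i (J i) γ = 0 := by
    intro i hi γ
    show coeff (Finsupp.single γ 1) (y i (J i)) = 0
    rw [hJ i hi, coeff_zero]
  have hkey : Cmᵀ * H * Cm = 0 := by
    ext α β
    rw [Matrix.zero_apply]
    have expand : (Cmᵀ * H * Cm) α β = ∑ a : Fin r × Fin d, ∑ b : Fin r × Fin d,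
        Cm a α * H a b * Cm b β := by
      rw [Matrix.mul_apply]
      simp_rw [Matrix.mul_apply, Matrix.transpose_apply, Finset.sum_mul]
      rw [Finset.sum_comm]
    rw [expand]
    have step : ∀ a : Fin r × Fin d,
        ∑ b : Fin r × Fin d, Cm a α * H a b * Cm b β
        = ∑ j' ∈ univ.erase a.2, c a.1 a.2 α * (c a.1 j' β *
            eval p (∏ j'' ∈ (univ.erase a.2).erase j', y a.1 j'')) := by
      intro a
      rw [Fintype.sum_prod_type]
      rw [Finset.sum_eq_single a.1]
      rotate_left
      · intro i2 _ hne
        refine Finset.sum_eq_zero fun j2 _ => ?_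
        have hH0 : H a (i2, j2) = 0 := by
          rw [hHa]
          rw [if_neg (by rintro ⟨h1, -, -⟩; exact hne h1.symm),
            if_neg (by rintro ⟨h1, -, -⟩; exact hne (congrArg Prod.fst h1).symm)]
        rw [hH0, mul_zero, zero_mul]
      · intro h; exact absurd (Finset.mem_univ a.1) h
      by_cases ha : a.1 ∈ s
      · have h02 : Cm a α * H a (a.1, a.2) * Cm (a.1, a.2) β = 0 := by
          have : H a (a.1, a.2) = 0 := by
            rw [hHa]
            rw [if_neg (by rintro ⟨-, -, h2⟩; exact h2 rfl),
              if_neg (by rintro ⟨-, h1, -⟩; exact h1 ha)]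
          rw [this, mul_zero, zero_mul]
        rw [← Finset.sum_erase (f := fun j2 => Cm a α * H a (a.1, j2) * Cm (a.1, j2) β) univ h02]
        refine Finset.sum_congr rfl fun j2 hj2 => ?_
        have hne : j2 ≠ a.2 := (Finset.mem_erase.1 hj2).1
        have : H a (a.1, j2) = eval p (∏ j'' ∈ (univ.erase a.2).erase j2, y a.1 j'') := by
          rw [hHa]
          exact if_pos ⟨rfl, ha, Ne.symm hne⟩
        rw [this]
        show c a.1 a.2 α * eval p _ * c a.1 j2 β = _
        ring
      · refine Eq.trans (Finset.sum_eq_zero fun j2 _ => ?_)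
          (Eq.symm (Finset.sum_eq_zero fun j' hj' => ?_))
        · by_cases hcond : a = (a.1, j2) ∧ a.1 ∉ s ∧ a.2 = J a.1
          · have hCm0 : Cm a α = 0 := by
              show c a.1 a.2 α = 0
              rw [hcond.2.2]
              exact hcJ a.1 ha α
            rw [hCm0, zero_mul, zero_mul]
          · have hH0 : H a (a.1, j2) = 0 := by
              rw [hHa]
              rw [if_neg (by rintro ⟨-, h1, -⟩; exact ha h1), if_neg hcond]
            rw [hH0, mul_zero, zero_mul]
        · have hne : j' ≠ a.2 := (Finset.mem_erase.1 hj').1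
          by_cases hJa : a.2 = J a.1
          · have : c a.1 a.2 α = 0 := by rw [hJa]; exact hcJ a.1 ha α
            rw [this, zero_mul]
          · by_cases hJ2 : j' = J a.1
            · have : c a.1 j' β = 0 := by rw [hJ2]; exact hcJ a.1 ha β
              rw [this, zero_mul, mul_zero]
            · have hmem : J a.1 ∈ (univ.erase a.2).erase j' := by
                rw [Finset.mem_erase, Finset.mem_erase]
                exact ⟨fun h => hJ2 h.symm, fun h => hJa h.symm, Finset.mem_univ _⟩
              rw [Finset.prod_eq_zero hmem (hJ a.1 ha), map_zero, mul_zero, mul_zero]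
    rw [Finset.sum_congr rfl fun a _ => step a, Fintype.sum_prod_type]
    exact E α β
  -- the set Z of distinguished zero positions
  set Z : Finset (Fin r × Fin d) := (univ.filter (fun i => i ∉ s)).image
    (fun i => (i, J i)) with hZ
  have hZmem : ∀ z : Fin r × Fin d, z ∈ Z ↔ z.1 ∉ s ∧ z.2 = J z.1 := by
    intro z
    rw [hZ, Finset.mem_image]
    constructor
    · rintro ⟨i, hi, rfl⟩
      exact ⟨(Finset.mem_filter.1 hi).2, rfl⟩
    · obtain ⟨z1, z2⟩ := z
      rintro ⟨h1, h2⟩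
      refine ⟨z1, Finset.mem_filter.2 ⟨Finset.mem_univ _, h1⟩, ?_⟩
      simp only at h2
      rw [h2]
  have hZcard : Z.card = r - s.card := by
    rw [hZ, Finset.card_image_of_injective _ (fun a b h => congrArg Prod.fst h)]
    have huniv : univ.filter (fun i : Fin r => i ∉ s) = univ \ s := by
      ext i; simp
    rw [huniv, Finset.card_sdiff_of_subset (Finset.subset_univ s), Finset.card_univ, Fintype.card_fin]
  have hZC : ∀ z ∈ Z, Cm z = 0 := by
    intro z hz
    obtain ⟨h1, h2⟩ := (hZmem z).1 hz
    funext γ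
    show c z.1 z.2 γ = 0
    rw [h2]
    exact hcJ z.1 h1 γ
  have hZH : ∀ z ∈ Z, ∀ x, H z x = if x = z then 1 else 0 := by
    intro z hz x
    obtain ⟨h1, h2⟩ := (hZmem z).1 hz
    rw [hHa]
    rw [if_neg (by rintro ⟨-, hmem, -⟩; exact h1 hmem)]
    by_cases hxz : x = z
    · subst hxz
      rw [if_pos ⟨rfl, h1, h2⟩, if_pos rfl]
    · rw [if_neg (by rintro ⟨hzx, -, -⟩; exact hxz hzx.symm), if_neg hxz]
  -- rank lower bound for H
  set e0 : Fin d := ⟨0, by omega⟩ with he0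
  set e1 : Fin d := ⟨1, by omega⟩ with he1
  have he01 : e0 ≠ e1 := by
    rw [he0, he1]
    intro h
    simpa using congrArg Fin.val h
  set A : Fin r → Fin d := fun i => if i ∈ s then e1 else J i with hA
  have hAin : ∀ i, i ∈ s → A i = e1 := fun i hi => if_pos hi
  have hAout : ∀ i, i ∉ s → A i = J i := fun i hi => if_neg hi
  set tgt : (Fin r ⊕ {i // i ∈ s}) → Fin r × Fin d :=
    Sum.elim (fun i => (i, A i)) (fun z => (z.1, e0)) with htgt
  set w : (Fin r ⊕ {i // i ∈ s}) → (Fin r × Fin d → K) :=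
    fun t => fun x => H x (tgt t) with hw
  have hwrange : ∀ t, w t ∈ LinearMap.range H.mulVecLin := by
    intro t
    refine ⟨Pi.single (tgt t) 1, ?_⟩
    rw [Matrix.mulVecLin_apply, Matrix.mulVec_single_one]
    rfl
  have hli : LinearIndependent K w := by
    rw [Fintype.linearIndependent_iff]
    intro g hg
    have heval : ∀ pt : Fin r × Fin d, ∑ t, g t * w t pt = 0 := by
      intro pt
      have := congrFun hg pt
      simpa [Finset.sum_apply] using this
    have c1 : ∀ i : Fin r, g (Sum.inl i) = 0 := by
      intro i
      by_cases hi : i ∈ s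
      · have h1 := heval (i, e0)
        rw [Finset.sum_eq_single (Sum.inl i) ?side1 ?side2] at h1
        case side2 => intro h; exact absurd (Finset.mem_univ _) h
        case side1 =>
          intro t _ hne
          rcases t with i' | z
          · have hi' : i' ≠ i := fun h => hne (by rw [h])
            have : w (Sum.inl i') (i, e0) = 0 := by
              show H (i, e0) (i', A i') = 0
              rw [hHa,
                if_neg (by rintro ⟨hfst, -, -⟩; exact hi' hfst.symm),
                if_neg (by rintro ⟨hab, -, -⟩; exact hi' (congrArg Prod.fst hab).symm)]
            rw [this, mul_zero]
          · have : w (Sum.inr z) (i, e0) = 0 := by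
              show H (i, e0) (z.1, e0) = 0
              rw [hHa,
                if_neg (by rintro ⟨-, -, hne2⟩; exact hne2 rfl),
                if_neg (by rintro ⟨-, hns, -⟩; exact hns hi)]
            rw [this, mul_zero]
        · have hval : w (Sum.inl i) (i, e0)
              = eval p (∏ j'' ∈ (univ.erase e0).erase e1, y i j'') := by
            show H (i, e0) (i, A i) = _
            rw [hAin i hi, hHa]
            exact if_pos ⟨rfl, hi, he01⟩
          have hnz : eval p (∏ j'' ∈ (univ.erase e0).erase e1, y i j'') ≠ 0 := by
            rw [map_prod]
            exact Finset.prod_ne_zero_iff.2 fun j _ => hp i hi j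
          rw [hval] at h1
          exact (mul_eq_zero.1 h1).resolve_right hnz
      · have hzz : (i, J i) ∈ Z := (hZmem (i, J i)).2 ⟨hi, rfl⟩
        have h1 := heval (i, J i)
        rw [Finset.sum_eq_single (Sum.inl i) ?bside1 ?bside2] at h1
        case bside2 => intro h; exact absurd (Finset.mem_univ _) h
        case bside1 =>
          intro t _ hne
          rcases t with i' | z
          · have hi' : i' ≠ i := fun h => hne (by rw [h])
            have : w (Sum.inl i') (i, J i) = 0 := by
              show H (i, J i) (i', A i') = 0
              rw [hZH _ hzz, if_neg (by intro hab; exact hi' (congrArg Prod.fst hab))]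
            rw [this, mul_zero]
          · have : w (Sum.inr z) (i, J i) = 0 := by
              show H (i, J i) (z.1, e0) = 0
              rw [hZH _ hzz, if_neg (by intro hab; exact hi ((show z.1 = i from congrArg Prod.fst hab) ▸ z.2))]
            rw [this, mul_zero]
        · have hval : w (Sum.inl i) (i, J i) = 1 := by
            show H (i, J i) (i, A i) = 1
            rw [hAout i hi, hZH _ hzz, if_pos rfl]
          rw [hval, mul_one] at h1
          exact h1
    have c2 : ∀ z : {i // i ∈ s}, g (Sum.inr z) = 0 := by
      intro z
      have h1 := heval (z.1, e1)
      rw [Finset.sum_eq_single (Sum.inr z) ?cside1 ?cside2] at h1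
      case cside2 => intro h; exact absurd (Finset.mem_univ _) h
      case cside1 =>
        intro t _ hne
        rcases t with i' | z'
        · by_cases hi' : i' = z.1
          · have : w (Sum.inl i') (z.1, e1) = 0 := by
              show H (z.1, e1) (i', A i') = 0
              rw [hi', hAin z.1 z.2, hHa,
                if_neg (by rintro ⟨-, -, hne2⟩; exact hne2 rfl),
                if_neg (by rintro ⟨-, hns, -⟩; exact hns z.2)]
            rw [this, mul_zero]
          · have : w (Sum.inl i') (z.1, e1) = 0 := by
              show H (z.1, e1) (i', A i') = 0
              rw [hHa,
                if_neg (by rintro ⟨hfst, -, -⟩; exact hi' hfst.symm),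
                if_neg (by rintro ⟨hab, -, -⟩; exact hi' (congrArg Prod.fst hab).symm)]
            rw [this, mul_zero]
        · have hz' : z'.1 ≠ z.1 := by
            intro h
            exact hne (by rw [Subtype.ext h])
          have : w (Sum.inr z') (z.1, e1) = 0 := by
            show H (z.1, e1) (z'.1, e0) = 0
            rw [hHa,
              if_neg (by rintro ⟨hfst, -, -⟩; exact hz' hfst.symm),
              if_neg (by rintro ⟨hab, -, -⟩; exact hz' (congrArg Prod.fst hab).symm)]
          rw [this, mul_zero]
      · have hval : w (Sum.inr z) (z.1, e1)
            = eval p (∏ j'' ∈ (univ.erase e1).erase e0, y z.1 j'') := by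
          show H (z.1, e1) (z.1, e0) = _
          rw [hHa]
          exact if_pos ⟨rfl, z.2, Ne.symm he01⟩
        have hnz : eval p (∏ j'' ∈ (univ.erase e1).erase e0, y z.1 j'') ≠ 0 := by
          rw [map_prod]
          exact Finset.prod_ne_zero_iff.2 fun j _ => hp z.1 z.2 j
        rw [hval] at h1
        exact (mul_eq_zero.1 h1).resolve_right hnz
    intro t
    rcases t with i | z
    · exact c1 i
    · exact c2 z
  have hrank : r + s.card ≤ H.rank := by
    have hle : Submodule.span K (Set.range w) ≤ LinearMap.range H.mulVecLin :=
      Submodule.span_le.2 (by rintro x ⟨t, rfl⟩; exact hwrange t)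
    have hm := Submodule.finrank_mono hle
    rw [finrank_span_eq_card hli] at hm
    rw [Matrix.rank]
    simpa [Fintype.card_sum, Fintype.card_coe, Fintype.card_fin] using hm
  have final := la Cm H hspanC hkey Z hZC hZH (r + s.card) hrank
  have hcard : Fintype.card (Fin r × Fin d) = r * d := by simp
  have hsle : s.card ≤ r := by
    have := Finset.card_le_card (Finset.subset_univ s)
    simpa using this
  have hrd : r * d = r * (d - 1) + r := by
    have hd1 : d - 1 + 1 = d := by omega
    calc r * d = r * (d - 1 + 1) := by rw [hd1]
    _ = r * (d - 1) + r := by ring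
  rw [hcard, hZcard] at final
  omega


end FanoAux

/-- A projective `k`-plane contained in `X_{r,d} ⊂ ℙ^{rd-1}` is given by linear forms
`y i j` in `k+1` variables (the pullbacks of the coordinates `x_{ij}`) which span the
full `(k+1)`-dimensional space of linear forms, such that `∑ i, ∏ j, y i j = 0`. -/
theorem stmt_9 {K : Type*} [Field K] [IsAlgClosed K] (r d k : ℕ) (hr : 1 < r) (hd : 2 < d) :
    (∃ y : Fin r → Fin d → MvPolynomial (Fin (k + 1)) K,
      (∀ i j, (y i j).IsHomogeneous 1) ∧
      (∀ α : Fin (k + 1), (X α : MvPolynomial (Fin (k + 1)) K) ∈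
        Submodule.span K (Set.range fun p : Fin r × Fin d => y p.1 p.2)) ∧
      (∑ i, ∏ j, y i j) = 0) ↔ k < r * (d - 1) := by
  constructor
  · rintro ⟨y, hhom, hspan, hzero⟩
    exact forward r d k hd y hhom hspan hzero
  · intro hk
    exact construction r d k (by omega) hd hk
end

section
/- Let y_{ij} (1 ≤ i ≤ r, 1 ≤ j ≤ d) be linear forms in K[z_0,...,z_k] such that the nonzero y_{ij} are linearly independent. Then Σ_{i=1}^r Π_{j=1}^d y_{ij} = 0 if and only if for each i there exists j with y_{ij} = 0. -/
open MvPolynomial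

private lemma degree_one_eq_single {σ : Type*} (m : σ →₀ ℕ) (h : m.degree = 1) :
    ∃ n, m = Finsupp.single n 1 := by
  classical
  have hm0 : m ≠ 0 := by
    intro h0
    rw [h0, map_zero] at h
    exact one_ne_zero h.symm
  obtain ⟨n, hn⟩ := Finsupp.support_nonempty_iff.mpr hm0
  refine ⟨n, ?_⟩
  have hmn : 1 ≤ m n := Nat.one_le_iff_ne_zero.mpr (Finsupp.mem_support_iff.mp hn)
  have hle : m n ≤ m.degree := Finsupp.le_degree n m
  have hmn1 : m n = 1 := le_antisymm (h ▸ hle) hmn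
  ext b
  rcases eq_or_ne b n with rfl | hb
  · simp [hmn1]
  · rw [Finsupp.single_apply, if_neg (fun hh => hb hh.symm)]
    by_contra hb0
    have hbs : b ∈ m.support := Finsupp.mem_support_iff.mpr hb0
    have h2 : 2 ≤ m.degree := by
      have : m n + m b ≤ ∑ a ∈ m.support, m a := by
        rw [← Finset.sum_pair (fun hh => hb hh.symm)]
        exact Finset.sum_le_sum_of_subset (by
          intro x hx
          simp only [Finset.mem_insert, Finset.mem_singleton] at hx
          rcases hx with rfl | rfl <;> assumption)
      calc 2 = 1 + 1 := rfl
        _ ≤ m n + m b := add_le_add hmn (Nat.one_le_iff_ne_zero.mpr hb0)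
        _ ≤ m.degree := this
    omega

theorem stmt_11 {K : Type*} [Field K] (r d k : ℕ) (hd : 0 < d)
    (y : Fin r → Fin d → MvPolynomial (Fin (k + 1)) K)
    (hy : ∀ i j, (y i j).IsHomogeneous 1)
    (hli : LinearIndependent K
      fun p : {p : Fin r × Fin d // y p.1 p.2 ≠ 0} => y p.1.1 p.1.2) :
    (∑ i, ∏ j, y i j) = 0 ↔ ∀ i, ∃ j, y i j = 0 := by
  constructor
  · intro h0
    -- set up the retraction π of the linear-combination map
    set P := {p : Fin r × Fin d // y p.1 p.2 ≠ 0} with hP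
    set f : (P →₀ K) →ₗ[K] MvPolynomial (Fin (k + 1)) K :=
      Finsupp.linearCombination K (fun p : P => y p.1.1 p.1.2) with hf
    obtain ⟨π, hπ⟩ := f.exists_leftInverse_of_injective (LinearMap.ker_eq_bot.mpr hli)
    set L : MvPolynomial (Fin (k + 1)) K →ₗ[K] MvPolynomial (Fin r × Fin d) K :=
      (Finsupp.linearCombination K (fun p : P => X (p.1 : Fin r × Fin d))).comp π with hL
    have key1 : ∀ p : P, L (y p.1.1 p.1.2) = X (p.1 : Fin r × Fin d) := by
      intro p
      have h1 : y p.1.1 p.1.2 = f (Finsupp.single p 1) := by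
        rw [hf, Finsupp.linearCombination_single, one_smul]
      have h2 : π (y p.1.1 p.1.2) = Finsupp.single p 1 := by
        rw [h1, ← LinearMap.comp_apply, hπ, LinearMap.id_apply]
      rw [hL, LinearMap.comp_apply, h2, Finsupp.linearCombination_single, one_smul]
    set g : Fin (k + 1) → MvPolynomial (Fin r × Fin d) K := fun n => L (X n) with hg
    -- aeval g agrees with L on homogeneous polynomials of degree 1
    have key2 : ∀ q : MvPolynomial (Fin (k + 1)) K, q.IsHomogeneous 1 → aeval g q = L q := by
      intro q hq
      conv_lhs => rw [q.as_sum]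
      conv_rhs => rw [q.as_sum]
      rw [map_sum, map_sum]
      refine Finset.sum_congr rfl fun v hv => ?_
      have hv1 : v.degree = 1 := by
        rw [Finsupp.degree_eq_weight_one]
        exact hq (mem_support_iff.mp hv)
      obtain ⟨n, rfl⟩ := degree_one_eq_single v hv1
      have hmon : (monomial (Finsupp.single n 1)) (coeff (Finsupp.single n 1) q)
          = (coeff (Finsupp.single n 1) q) • X n := by
        rw [smul_eq_C_mul, C_mul_X_eq_monomial]
      rw [hmon, map_smul, map_smul, aeval_X]
    -- transport the hypothesis through aeval g
    have hsum : ∑ i, ∏ j, aeval g (y i j) = 0 := by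
      simp_rw [← map_prod]
      rw [← map_sum, h0, map_zero]
    -- monomials
    set m : Fin r → (Fin r × Fin d) →₀ ℕ := fun i => ∑ j, Finsupp.single (i, j) 1 with hm
    have hmprod : ∀ i : Fin r, (∀ j, y i j ≠ 0) →
        (∏ j, aeval g (y i j)) = monomial (m i) (1 : K) := by
      intro i hi
      have : ∀ j : Fin d, aeval g (y i j) = X ((i, j) : Fin r × Fin d) := by
        intro j
        rw [key2 _ (hy i j)]
        exact key1 ⟨(i, j), hi j⟩
      simp_rw [this]
      rw [hm]
      exact (monomial_sum_one (R := K) Finset.univ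
        (fun j : Fin d => Finsupp.single ((i, j) : Fin r × Fin d) 1)).symm
    -- m is injective enough
    have hmapp : ∀ i i0 : Fin r, (m i) (i0, ⟨0, hd⟩) = if i = i0 then 1 else 0 := by
      intro i i0
      rw [hm]
      rw [Finset.sum_apply']
      simp_rw [Finsupp.single_apply]
      rcases eq_or_ne i i0 with rfl | hne
      · rw [if_pos rfl]
        rw [Finset.sum_eq_single (⟨0, hd⟩ : Fin d)]
        · simp
        · intro b _ hb
          rw [if_neg (by simp [Prod.ext_iff, hb])]
        · intro habs; exact absurd (Finset.mem_univ _) habs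
      · rw [if_neg hne]
        refine Finset.sum_eq_zero fun j _ => ?_
        rw [if_neg (by simp [Prod.ext_iff, hne])]
    -- now derive the conclusion
    intro i0
    by_contra hne
    push_neg at hne
    have hco : coeff (m i0) (∑ i, ∏ j, aeval g (y i j)) = 1 := by
      rw [coeff_sum]
      rw [Finset.sum_eq_single i0]
      · rw [hmprod i0 hne, coeff_monomial, if_pos rfl]
      · intro i _ hi
        by_cases hbad : ∃ j, y i j = 0
        · obtain ⟨j, hj⟩ := hbad
          rw [Finset.prod_eq_zero (Finset.mem_univ j) (by rw [hj, map_zero]), coeff_zero]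
        · push_neg at hbad
          rw [hmprod i hbad, coeff_monomial, if_neg]
          intro heq
          have := congrArg (fun f : (Fin r × Fin d) →₀ ℕ => f (i0, ⟨0, hd⟩)) heq
          rw [hmapp i i0, hmapp i0 i0, if_neg hi, if_pos rfl] at this
          exact one_ne_zero this.symm
      · intro habs; exact absurd (Finset.mem_univ _) habs
    rw [hsum, coeff_zero] at hco
    exact one_ne_zero hco.symm
  · intro h
    refine Finset.sum_eq_zero fun i _ => ?_
    obtain ⟨j, hj⟩ := h i
    exact Finset.prod_eq_zero (Finset.mem_univ j) hj
end

section
/- Property C^d_{k,1,2} holds for all d > 0 and k ≥ 0: given an equation bl = Σ_{i=1}^{k+2} f_i·x_i where bl is a product of d linear forms, the x_i are pairwise coprime squarefree monomials ordered by degree, the f_i are forms of degree d - deg(x_i), deg(x_i) + deg(x_j) ≥ d+1 whenever max(i,j) > k, and deg(x_i) + deg(x_j) ≥ d+2 whenever both i, j > k, then f_i = 0 for some i > k. -/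
open MvPolynomial

set_option linter.unusedSectionVars false

namespace C12Aux

variable {K : Type*} {σ : Type*}

section Semiring
variable [CommSemiring K]

/-- The algebra map killing the variables satisfying `P`. -/
noncomputable def kill (P : σ → Prop) : MvPolynomial σ K →ₐ[K] MvPolynomial σ K :=
  open Classical in aeval (fun v => if P v then 0 else X v)

lemma kill_X_of {P : σ → Prop} {v : σ} (h : P v) : kill (K := K) P (X v) = 0 := by
  unfold kill; rw [aeval_X, if_pos h]

lemma kill_X_of_not {P : σ → Prop} {v : σ} (h : ¬ P v) :
    kill (K := K) P (X v) = X v := by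
  unfold kill; rw [aeval_X, if_neg h]

lemma kill_monomial_of_avoid (P : σ → Prop) {m : σ →₀ ℕ}
    (h : ∀ v ∈ m.support, ¬ P v) (c : K) :
    kill P (monomial m c) = monomial m c := by
  unfold kill
  rw [aeval_monomial, algebraMap_eq]
  conv_rhs => rw [monomial_eq]
  congr 1
  apply Finsupp.prod_congr
  intro v hv
  rw [if_neg (h v hv)]

lemma kill_monomial_of_hit (P : σ → Prop) {m : σ →₀ ℕ}
    (h : ∃ v ∈ m.support, P v) (c : K) :
    kill P (monomial m c) = 0 := by
  obtain ⟨v, hv, hPv⟩ := h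
  unfold kill
  rw [aeval_monomial, Finsupp.prod]
  apply mul_eq_zero_of_right
  apply Finset.prod_eq_zero hv
  rw [if_pos hPv]
  exact zero_pow (Finsupp.mem_support_iff.mp hv)

open Classical in
lemma coeff_kill_monomial (P : σ → Prop) (m n : σ →₀ ℕ) (c : K) :
    coeff n (kill P (monomial m c))
      = if m = n ∧ ∀ v ∈ m.support, ¬ P v then c else 0 := by
  classical
  by_cases hA : ∀ v ∈ m.support, ¬ P v
  · rw [kill_monomial_of_avoid P hA, coeff_monomial]
    by_cases hmn : m = n
    · rw [if_pos hmn, if_pos ⟨hmn, hA⟩]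
    · rw [if_neg hmn, if_neg (fun hc => hmn hc.1)]
  · push_neg at hA
    obtain ⟨v, hv, hPv⟩ := hA
    rw [kill_monomial_of_hit P ⟨v, hv, hPv⟩, coeff_zero, if_neg]
    rintro ⟨-, h⟩
    exact h v hv hPv

lemma kill_as_sum (P : σ → Prop) (p : MvPolynomial σ K) :
    kill P p = ∑ m ∈ p.support, kill P (monomial m (coeff m p)) := by
  conv_lhs => rw [p.as_sum]
  exact map_sum _ _ _

lemma coeff_kill_of_avoid (P : σ → Prop) (p : MvPolynomial σ K) {n : σ →₀ ℕ}
    (h : ∀ v ∈ n.support, ¬ P v) : coeff n (kill P p) = coeff n p := by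
  classical
  rw [kill_as_sum, coeff_sum]
  have e2 : ∀ m ∈ p.support,
      coeff n (kill P (monomial m (coeff m p))) = if m = n then coeff m p else 0 := by
    intro m _
    rw [coeff_kill_monomial]
    rcases eq_or_ne m n with rfl | hmn
    · rw [if_pos ⟨rfl, h⟩, if_pos rfl]
    · rw [if_neg (fun hc => hmn hc.1), if_neg hmn]
  rw [Finset.sum_congr rfl e2, Finset.sum_ite_eq' p.support n (fun m => coeff m p)]
  by_cases hn : n ∈ p.support
  · rw [if_pos hn]
  · rw [if_neg hn]
    exact (MvPolynomial.notMem_support_iff.mp hn).symm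

lemma coeff_kill_of_hit (P : σ → Prop) (p : MvPolynomial σ K) {n : σ →₀ ℕ}
    (h : ∃ v ∈ n.support, P v) : coeff n (kill P p) = 0 := by
  classical
  rw [kill_as_sum, coeff_sum]
  refine Finset.sum_eq_zero fun m _ => ?_
  rw [coeff_kill_monomial, if_neg]
  rintro ⟨rfl, hav⟩
  obtain ⟨v, hv, hPv⟩ := h
  exact hav v hv hPv

lemma kill_isHomogeneous (P : σ → Prop) {p : MvPolynomial σ K} {n : ℕ}
    (hp : p.IsHomogeneous n) : (kill P p).IsHomogeneous n := by
  intro m hm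
  by_cases h : ∀ v ∈ m.support, ¬ P v
  · exact hp (by rwa [coeff_kill_of_avoid P p h] at hm)
  · push_neg at h
    rw [coeff_kill_of_hit P p h] at hm
    exact absurd rfl hm

end Semiring

section Domain
variable [CommRing K] [IsDomain K]

lemma X_dvd_of_kill_eq_zero {s : σ} {p : MvPolynomial σ K}
    (h : kill (· = s) p = 0) : X s ∣ p := by
  classical
  conv_rhs => rw [p.as_sum]
  refine Finset.dvd_sum fun m hm => ?_
  rw [X_dvd_monomial]
  right
  intro hms
  have havoid : ∀ v ∈ m.support, ¬ (v = s) := by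
    rintro v hv rfl
    exact (Finsupp.mem_support_iff.mp hv) hms
  have h2 : coeff m p = 0 := by
    rw [← coeff_kill_of_avoid (· = s) p havoid, h, coeff_zero]
  exact (MvPolynomial.mem_support_iff.mp hm) h2

lemma prime_X (s : σ) : Prime (X s : MvPolynomial σ K) := by
  refine ⟨X_ne_zero s, ?_, ?_⟩
  · intro hu
    have h0 := hu.map (eval (fun _ => (0 : K)))
    rw [eval_X] at h0
    exact not_isUnit_zero h0
  · rintro a b ⟨q, hq⟩
    have h0 : kill (· = s) (a * b) = 0 := by
      rw [hq, map_mul, kill_X_of (P := fun x => x = s) rfl, zero_mul]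
    rw [map_mul] at h0
    rcases mul_eq_zero.mp h0 with h | h
    · exact Or.inl (X_dvd_of_kill_eq_zero h)
    · exact Or.inr (X_dvd_of_kill_eq_zero h)

lemma degree_support_card_le {m : σ →₀ ℕ} : m.support.card ≤ ∑ v ∈ m.support, m v := by
  rw [Finset.card_eq_sum_ones]
  exact Finset.sum_le_sum fun v hv =>
    Nat.one_le_iff_ne_zero.mpr (Finsupp.mem_support_iff.mp hv)

lemma eq_single_of_dvd {p : MvPolynomial σ K} (hp : p.IsHomogeneous 1) {s : σ}
    (hdvd : X s ∣ p) {m : σ →₀ ℕ} (hm : coeff m p ≠ 0) : m = Finsupp.single s 1 := by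
  classical
  have hdeg : ∑ v ∈ m.support, m v = 1 := by
    have h2 : Finsupp.degree m = Finsupp.weight 1 m :=
      DFunLike.congr_fun Finsupp.degree_eq_weight_one m
    have h3 : Finsupp.weight 1 m = 1 := hp hm
    exact (h2.trans h3 : _)
  obtain ⟨q, rfl⟩ := hdvd
  rw [coeff_X_mul'] at hm
  have hs : s ∈ m.support := by
    by_contra h
    rw [if_neg h] at hm
    exact hm rfl
  have h1s : 1 ≤ m s := Nat.one_le_iff_ne_zero.mpr (Finsupp.mem_support_iff.mp hs)
  have hmsle : m s ≤ 1 := by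
    calc m s ≤ ∑ v ∈ m.support, m v :=
          Finset.single_le_sum (fun _ _ => Nat.zero_le _) hs
    _ = 1 := hdeg
  have hother : ∀ v, v ≠ s → m v = 0 := by
    intro v hv
    by_contra h0
    have hvs : v ∈ m.support := Finsupp.mem_support_iff.mpr h0
    have hsub : ({s, v} : Finset σ) ⊆ m.support := by
      intro x hx
      rcases Finset.mem_insert.mp hx with rfl | hx
      · exact hs
      · rw [Finset.mem_singleton.mp hx]; exact hvs
    have hle2 := Finset.sum_le_sum_of_subset (f := (m : σ → ℕ)) hsub
    rw [Finset.sum_pair (Ne.symm hv)] at hle2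
    have h1v : 1 ≤ m v := Nat.one_le_iff_ne_zero.mpr h0
    omega
  ext v
  rcases eq_or_ne v s with rfl | hv
  · rw [Finsupp.single_eq_same]; omega
  · rw [Finsupp.single_eq_of_ne' (Ne.symm hv)]
    exact hother v hv

lemma coeff_single_ne_zero {p : MvPolynomial σ K} (hp : p.IsHomogeneous 1) {s : σ}
    (hdvd : X s ∣ p) (hp0 : p ≠ 0) : coeff (Finsupp.single s 1) p ≠ 0 := by
  obtain ⟨m, hm⟩ := ne_zero_iff.mp hp0
  have := eq_single_of_dvd hp hdvd hm
  rwa [this] at hm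

lemma build_kill {n : ℕ} (S : Fin n → Finset σ)
    (hdisj : Pairwise (Function.onFun Disjoint S))
    (f : Fin n → MvPolynomial σ K) (i0 : Fin n) {m0 : σ →₀ ℕ}
    (hm0 : coeff m0 (f i0) ≠ 0)
    (htrans : ∀ i, i ≠ i0 → ¬ S i ⊆ m0.support) :
    ∃ P : σ → Prop,
      kill P (∑ i, f i * ∏ x ∈ S i, X x) = kill P (f i0) * ∏ x ∈ S i0, X x ∧
      kill P (f i0) ≠ 0 ∧
      (∀ v ∈ S i0, ¬ P v) ∧
      (∀ j, j ≠ i0 → ∃ z ∈ S j, ∀ v ∈ S j, (P v ↔ v = z)) := by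
  classical
  have hz : ∀ i : Fin n, i ≠ i0 → ∃ z, z ∈ S i ∧ z ∉ m0.support := fun i hi =>
    Finset.not_subset.mp (htrans i hi)
  choose z hzS hzm using hz
  set P : σ → Prop := fun v => ∃ i, ∃ h : i ≠ i0, z i h = v with hP
  have hfree : ∀ v ∈ S i0, ¬ P v := by
    rintro v hv ⟨i, hi, rfl⟩
    exact Finset.disjoint_left.mp (hdisj hi) (hzS i hi) hv
  refine ⟨P, ?_, ?_, hfree, ?_⟩
  · rw [map_sum, Finset.sum_eq_single i0]
    · rw [map_mul]
      congr 1
      rw [map_prod]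
      exact Finset.prod_congr rfl fun x hx => kill_X_of_not (hfree x hx)
    · intro i _ hi
      rw [map_mul, map_prod]
      apply mul_eq_zero_of_right
      apply Finset.prod_eq_zero (hzS i hi)
      exact kill_X_of ⟨i, hi, rfl⟩
    · intro h
      exact absurd (Finset.mem_univ i0) h
  · intro h0
    apply hm0
    rw [← coeff_kill_of_avoid P (f i0) (n := m0) ?_, h0, coeff_zero]
    rintro v hv ⟨i, hi, rfl⟩
    exact hzm i hi hv
  · intro j hj
    refine ⟨z j hj, hzS j hj, fun v hv => ⟨?_, fun he => ⟨j, hj, he.symm⟩⟩⟩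
    rintro ⟨i, hi, rfl⟩
    have hij : i = j := by
      by_contra hij
      exact Finset.disjoint_left.mp (hdisj hij) (hzS i hi) hv
    subst hij
    rfl

lemma extract {d : ℕ} (hd : 0 < d) (q : Fin d → MvPolynomial σ K)
    (hq1 : ∀ j, (q j).IsHomogeneous 1)
    (T : Finset σ) (g0 : MvPolynomial σ K) (hg0 : g0 ≠ 0)
    (heq : ∏ j, q j = g0 * ∏ x ∈ T, X x) :
    ∃ g : σ → Fin d, (∀ s ∈ T, X s ∣ q (g s)) ∧ Set.InjOn g T ∧ ∀ j, q j ≠ 0 := by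
  classical
  have hprod : (∏ j, q j) ≠ 0 := by
    rw [heq]
    exact mul_ne_zero hg0 (Finset.prod_ne_zero_iff.mpr fun x _ => X_ne_zero x)
  have hq0 : ∀ j, q j ≠ 0 := fun j =>
    Finset.prod_ne_zero_iff.mp hprod j (Finset.mem_univ j)
  have hex : ∀ s : σ, ∃ j : Fin d, s ∈ T → X s ∣ q j := by
    intro s
    by_cases hs : s ∈ T
    · have hdvd : (X s : MvPolynomial σ K) ∣ ∏ j, q j := by
        rw [heq]
        exact Dvd.dvd.mul_left (Finset.dvd_prod_of_mem _ hs) g0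
      obtain ⟨j, -, hj⟩ := (prime_X s).exists_mem_finset_dvd hdvd
      exact ⟨j, fun _ => hj⟩
    · exact ⟨⟨0, hd⟩, fun h => absurd h hs⟩
  choose g hg using hex
  refine ⟨g, fun s hs => hg s hs, fun s hs s' hs' hss => ?_, hq0⟩
  have h1 := hg s hs
  have h2 := hg s' hs'
  rw [hss] at h1
  have e1 := coeff_single_ne_zero (hq1 _) h1 (hq0 _)
  have e2 := eq_single_of_dvd (hq1 _) h2 e1
  exact Finsupp.single_left_injective one_ne_zero e2

end Domain

end C12Aux


open C12Aux in
/-- Property `C^d_{k,1,2}`: indices are `0`-based, so the `1`-based condition "`i > k`"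
becomes "`k ≤ i`". -/
theorem stmt_14 {K σ : Type*} [Field K] [IsAlgClosed K] (d k : ℕ) (hd : 0 < d)
    (S : Fin (k + 2) → Finset σ) (hdisj : Pairwise (Function.onFun Disjoint S))
    (hmono : Monotone fun i => (S i).card) (hle : ∀ i, (S i).card ≤ d)
    (h1 : ∀ i j : Fin (k + 2), i ≠ j → (k ≤ (i : ℕ) ∨ k ≤ (j : ℕ)) →
      d + 1 ≤ (S i).card + (S j).card)
    (h2 : ∀ i j : Fin (k + 2), i ≠ j → k ≤ (i : ℕ) → k ≤ (j : ℕ) →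
      d + 2 ≤ (S i).card + (S j).card)
    (f : Fin (k + 2) → MvPolynomial σ K)
    (hf : ∀ i, (f i).IsHomogeneous (d - (S i).card))
    (hbl : ProdLinear d (∑ i, f i * ∏ x ∈ S i, X x)) :
    ∃ i : Fin (k + 2), k ≤ (i : ℕ) ∧ f i = 0 := by
  classical
  by_contra hcon
  push_neg at hcon
  set K1 : Fin (k + 2) := ⟨k, by omega⟩ with hK1def
  set K2 : Fin (k + 2) := ⟨k + 1, by omega⟩ with hK2def
  have hK12 : K1 ≠ K2 := by
    intro h
    have := congrArg Fin.val h
    simp [hK1def, hK2def] at this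
  have hf1 : f K1 ≠ 0 := hcon K1 (le_refl k)
  have hf2 : f K2 ≠ 0 := hcon K2 (Nat.le_succ k)
  obtain ⟨m1, hm1⟩ := ne_zero_iff.mp hf1
  obtain ⟨m2, hm2⟩ := ne_zero_iff.mp hf2
  -- size of supports of monomials of `f i`
  have hdegm : ∀ (i : Fin (k + 2)) (m : σ →₀ ℕ), coeff m (f i) ≠ 0 →
      m.support.card ≤ d - (S i).card := by
    intro i m hm
    calc m.support.card ≤ ∑ v ∈ m.support, m v := degree_support_card_le
    _ = Finsupp.degree m := rfl
    _ = Finsupp.weight 1 m := DFunLike.congr_fun Finsupp.degree_eq_weight_one m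
    _ = d - (S i).card := hf i hm
  have htrans : ∀ (i0 : Fin (k + 2)), k ≤ (i0 : ℕ) → ∀ (m : σ →₀ ℕ),
      coeff m (f i0) ≠ 0 → ∀ i, i ≠ i0 → ¬ S i ⊆ m.support := by
    intro i0 hk0 m hm i hi hsub
    have hc := hdegm i0 m hm
    have hcard := Finset.card_le_card hsub
    have hd1 := h1 i i0 hi (Or.inr hk0)
    have hd2 := hle i0
    omega
  obtain ⟨P1, heq1, hne1, hfree1, hz1⟩ :=
    build_kill S hdisj f K2 hm2 (htrans K2 (Nat.le_succ k) m2 hm2)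
  obtain ⟨P2, heq2, hne2, hfree2, hz2⟩ :=
    build_kill S hdisj f K1 hm1 (htrans K1 (le_refl k) m1 hm1)
  obtain ⟨l, hlh, hbleq⟩ := hbl
  have hprod1 : ∏ j, kill P1 (l j) = kill P1 (f K2) * ∏ x ∈ S K2, X x := by
    rw [← map_prod, ← hbleq]
    exact heq1
  have hprod2 : ∏ j, kill P2 (l j) = kill P2 (f K1) * ∏ x ∈ S K1, X x := by
    rw [← map_prod, ← hbleq]
    exact heq2
  obtain ⟨g1, hg1, hinj1, hq01⟩ := extract hd (fun j => kill P1 (l j))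
    (fun j => kill_isHomogeneous P1 (hlh j)) (S K2) _ hne1 hprod1
  obtain ⟨g2, hg2, hinj2, hq02⟩ := extract hd (fun j => kill P2 (l j))
    (fun j => kill_isHomogeneous P2 (hlh j)) (S K1) _ hne2 hprod2
  set J1 : Finset (Fin d) := (S K2).image g1 with hJ1def
  set J2 : Finset (Fin d) := (S K1).image g2 with hJ2def
  have hcard1 : J1.card = (S K2).card := Finset.card_image_of_injOn hinj1
  have hcard2 : J2.card = (S K1).card := Finset.card_image_of_injOn hinj2
  have hcup : (J1 ∪ J2).card ≤ d := by
    calc (J1 ∪ J2).card ≤ Fintype.card (Fin d) := Finset.card_le_univ _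
    _ = d := Fintype.card_fin d
  have hsum : (J1 ∪ J2).card + (J1 ∩ J2).card = J1.card + J2.card :=
    Finset.card_union_add_card_inter J1 J2
  have habd : d + 2 ≤ (S K1).card + (S K2).card :=
    h2 K1 K2 hK12 (le_refl k) (Nat.le_succ k)
  have hint : 1 < (J1 ∩ J2).card := by omega
  obtain ⟨j1, hj1, j2, hj2, hjne⟩ := Finset.one_lt_card.mp hint
  obtain ⟨sstar, hsstarS, hsstar⟩ := hz2 K2 hK12.symm
  have key : ∀ j ∈ J1 ∩ J2, g1 sstar = j := by
    intro j hj
    obtain ⟨hjJ1, hjJ2⟩ := Finset.mem_inter.mp hj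
    obtain ⟨s, hsV, hgs⟩ := Finset.mem_image.mp hjJ1
    obtain ⟨t, htT, hgt⟩ := Finset.mem_image.mp hjJ2
    suffices hss : s = sstar by rw [← hss]; exact hgs
    by_contra hne
    have hnP2 : ¬ P2 s := fun hP => hne ((hsstar s hsV).mp hP)
    have hnP1 : ¬ P1 s := hfree1 s hsV
    have hdvd1 : X s ∣ kill P1 (l j) := by
      have := hg1 s hsV
      rwa [hgs] at this
    have hdvd2 : X t ∣ kill P2 (l j) := by
      have := hg2 t htT
      rwa [hgt] at this
    have hc1 : coeff (Finsupp.single s 1) (kill P1 (l j)) ≠ 0 :=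
      coeff_single_ne_zero (kill_isHomogeneous P1 (hlh j)) hdvd1 (hq01 j)
    have hsupp : ∀ w ∈ (Finsupp.single s (1 : ℕ)).support, w = s := by
      intro w hw
      rw [Finsupp.support_single_ne_zero s one_ne_zero] at hw
      exact Finset.mem_singleton.mp hw
    have hc1' : coeff (Finsupp.single s 1) (l j) ≠ 0 := by
      rwa [coeff_kill_of_avoid P1 (l j) (fun w hw => (hsupp w hw) ▸ hnP1)] at hc1
    have hc2 : coeff (Finsupp.single s 1) (kill P2 (l j)) ≠ 0 := by
      rwa [coeff_kill_of_avoid P2 (l j) (fun w hw => (hsupp w hw) ▸ hnP2)]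
    have he := eq_single_of_dvd (kill_isHomogeneous P2 (hlh j)) hdvd2 hc2
    have hst : s = t := Finsupp.single_left_injective one_ne_zero he
    exact Finset.disjoint_left.mp (hdisj hK12) htT (hst ▸ hsV)
  exact hjne ((key j1 hj1).symm.trans (key j2 hj2))
end

section
/- Fix d and m, and assume property C^d_{k,m,m+1} holds for every k ≥ 0. Then property C^d_{k,m,n} holds for every k ≥ 0 and every n > m. -/
open MvPolynomial

/-- Property `C^d_{k,m,n}` (indices `0`-based, so the `1`-based "`i > k`" becomes
"`k ≤ i`"): for any equation `bl₁ + ⋯ + bl_m = ∑_{i=1}^{k+n} f_i·x_i` with the stated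
degree conditions, there are `n - m` indices `i > k` with `f_i = 0`. -/
def PropCkmn (σ K : Type*) [Field K] (d k m n : ℕ) : Prop :=
  ∀ S : Fin (k + n) → Finset σ, Pairwise (Function.onFun Disjoint S) →
    Monotone (fun i => (S i).card) →
    (∀ i, (S i).card ≤ d) →
    (∀ i j : Fin (k + n), i ≠ j → (k ≤ (i : ℕ) ∨ k ≤ (j : ℕ)) →
      d + 1 ≤ (S i).card + (S j).card) →
    (∀ i j : Fin (k + n), i ≠ j → k ≤ (i : ℕ) → k ≤ (j : ℕ) →
      d + 2 ≤ (S i).card + (S j).card) →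
    ∀ bl : Fin m → MvPolynomial σ K, (∀ i, ProdLinear d (bl i)) →
    ∀ f : Fin (k + n) → MvPolynomial σ K, (∀ i, (f i).IsHomogeneous (d - (S i).card)) →
    (∑ i, bl i) = (∑ i, f i * ∏ x ∈ S i, X x) →
    ∃ T : Finset (Fin (k + n)), T.card = n - m ∧ ∀ i ∈ T, k ≤ (i : ℕ) ∧ f i = 0

private lemma le_succAbove_val {n : ℕ} (p : Fin (n + 1)) (j : Fin n) :
    (j : ℕ) ≤ (p.succAbove j : ℕ) := by
  unfold Fin.succAbove; split <;> simp

theorem stmt_15 {K σ : Type*} [Field K] [IsAlgClosed K] (d m : ℕ)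
    (h : ∀ k, PropCkmn σ K d k m (m + 1)) :
    ∀ k n, m < n → PropCkmn σ K d k m n := by
  intro k n hn
  induction n, hn using Nat.le_induction generalizing k with
  | base => exact h k
  | succ n hn IH =>
    intro S hdisj hmono hcard h1 h2 bl hbl f hf heq
    -- Step A: apply the hypothesis with k' = k + (n - m), n' = m + 1
    set k' := k + (n - m) with hk'
    have hkn : k' + (m + 1) = k + (n + 1) := by omega
    let e : Fin (k' + (m + 1)) → Fin (k + (n + 1)) := Fin.cast hkn
    have he_inj : Function.Injective e := Fin.cast_injective hkn
    have he_val : ∀ i, ((e i : Fin (k + (n+1))) : ℕ) = (i : ℕ) := fun i => rfl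
    obtain ⟨T', hT'card, hT'⟩ :=
      h k' (fun i => S (e i))
        (fun i j hij => hdisj (he_inj.ne hij))
        (fun a b hab => hmono (show e a ≤ e b from hab))
        (fun i => hcard (e i))
        (fun i j hij hk => h1 (e i) (e j) (he_inj.ne hij) (by
          rcases hk with hk | hk
          · exact Or.inl (by rw [he_val]; omega)
          · exact Or.inr (by rw [he_val]; omega)))
        (fun i j hij hki hkj => h2 (e i) (e j) (he_inj.ne hij)
          (by rw [he_val]; omega) (by rw [he_val]; omega))
        bl hbl (fun i => f (e i)) (fun i => hf (e i))
        (by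
          rw [heq]
          exact (Fintype.sum_equiv (finCongr hkn) _ _ (fun i => rfl)).symm)
    have : T'.card = 1 := by rw [hT'card]; omega
    obtain ⟨i₀', hT'eq⟩ := Finset.card_eq_one.mp this
    obtain ⟨hk'le, hf0⟩ := hT' i₀' (by simp [hT'eq])
    set i₀ : Fin (k + (n + 1)) := e i₀' with hi₀
    have hi₀val : k' ≤ (i₀ : ℕ) := hk'le
    -- Step B: delete index i₀ and apply IH
    have hg_inj : Function.Injective i₀.succAbove := Fin.succAbove_right_injective
    have hg_val : ∀ j : Fin (k + n), (j : ℕ) ≤ ((i₀.succAbove j : Fin (k + (n+1))) : ℕ) :=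
      le_succAbove_val i₀
    obtain ⟨T, hTcard, hT⟩ :=
      IH k (fun j => S (i₀.succAbove j))
        (fun i j hij => hdisj (hg_inj.ne hij))
        (fun a b hab => hmono ((Fin.strictMono_succAbove i₀).monotone hab))
        (fun j => hcard _)
        (fun i j hij hk => h1 _ _ (hg_inj.ne hij) (by
          rcases hk with hk | hk
          · exact Or.inl (le_trans hk (hg_val i))
          · exact Or.inr (le_trans hk (hg_val j))))
        (fun i j hij hki hkj => h2 _ _ (hg_inj.ne hij)
          (le_trans hki (hg_val i)) (le_trans hkj (hg_val j)))
        bl hbl (fun j => f (i₀.succAbove j)) (fun j => hf _)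
        (by
          have hs := Fin.sum_univ_succAbove
            (fun i : Fin (k + n + 1) => f i * ∏ x ∈ S i, X x) i₀
          rw [hf0] at hs
          exact heq.trans (hs.trans (by rw [zero_mul, zero_add])))
    -- Assemble the final set
    refine ⟨insert i₀ (T.map ⟨i₀.succAbove, hg_inj⟩), ?_, ?_⟩
    · rw [Finset.card_insert_of_notMem (by
        simp only [Finset.mem_map]
        rintro ⟨j, _, hj⟩
        exact Fin.succAbove_ne i₀ j hj), Finset.card_map, hTcard]
      omega
    · intro i hi
      rcases Finset.mem_insert.mp hi with rfl | hi
      · exact ⟨by omega, hf0⟩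
      · obtain ⟨j, hjT, rfl⟩ := Finset.mem_map.mp hi
        obtain ⟨hkj, hfj⟩ := hT j hjT
        exact ⟨le_trans hkj (hg_val j), hfj⟩
end
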